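/- arXiv:1001.3195 — 8 statements merged into one kernel-verified Lean document; each statement's English description precedes it below -/
import Mathlib

section
/- Let Δ be a simplicial complex on [m] with underlying graph G = G(Δ). Then the image of the parametrization φ_Δ is a closed subset of the cone S⪰0^m(G) of positive semidefinite m×m matrices whose (i,j) entry is zero whenever i ≠ j and {i,j} is not an edge of G. -/
open Matrix

/-- `Δ` is a simplicial complex with ground set all of `V`: it is closed under
taking subsets and every vertex lies in some face. -/
def IsSimplicialComplex {V : Type*} [Fintype V] [DecidableEq V]
    (Δ : Finset (Finset V)) : Prop :=
  (∀ F ∈ Δ, ∀ F', F' ⊆ F → F' ∈ Δ) ∧ ∀ i : V, ∃ F ∈ Δ, i ∈ F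

/-- The parametrization `φ_Δ`, sending `γ = (γ_{i,F})` to the matrix with entries
`φ_Δ(γ)_{ij} = ∑_{F ∈ Δ : i,j ∈ F} γ_{i,F} γ_{j,F}`. -/
def phi {V : Type*} [Fintype V] [DecidableEq V] (Δ : Finset (Finset V))
    (γ : Finset V → V → ℝ) : Matrix V V ℝ :=
  Matrix.of fun i j => ∑ F ∈ Δ, if i ∈ F ∧ j ∈ F then γ F i * γ F j else 0

/-- The image of the parametrization `φ_Δ`. -/
def phiImage {V : Type*} [Fintype V] [DecidableEq V] (Δ : Finset (Finset V)) :
    Set (Matrix V V ℝ) :=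
  Set.range (phi Δ)

/-- The underlying graph `G(Δ)`: its edges are the 2-element faces of `Δ`. -/
def underlyingGraph {V : Type*} [Fintype V] [DecidableEq V]
    (Δ : Finset (Finset V)) : SimpleGraph V where
  Adj i j := i ≠ j ∧ ({i, j} : Finset V) ∈ Δ
  symm := ⟨fun i j h => ⟨h.1.symm, by rw [Finset.pair_comm]; exact h.2⟩⟩
  loopless := ⟨fun i h => h.1 rfl⟩

/-- The cone `S⪰0^m(G)` of positive semidefinite matrices with zeros at the
non-edges of `G`. -/
def psdCone {V : Type*} [Fintype V] (G : SimpleGraph V) :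
    Set (Matrix V V ℝ) :=
  {S | S.PosSemidef ∧ ∀ i j, i ≠ j → ¬ G.Adj i j → S i j = 0}

lemma phi_continuous {V : Type*} [Fintype V] [DecidableEq V] (Δ : Finset (Finset V)) :
    Continuous (phi Δ) := by
  apply continuous_pi; intro i; apply continuous_pi; intro j
  apply continuous_finset_sum; intro F _
  by_cases h : i ∈ F ∧ j ∈ F
  · simp only [if_pos h]
    fun_prop
  · simp only [if_neg h]; exact continuous_const

lemma phi_trunc {V : Type*} [Fintype V] [DecidableEq V] (Δ : Finset (Finset V))
    (γ : Finset V → V → ℝ) :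
    phi Δ (fun F i => if F ∈ Δ ∧ i ∈ F then γ F i else 0) = phi Δ γ := by
  ext i j
  apply Finset.sum_congr rfl
  intro F hF
  by_cases h : i ∈ F ∧ j ∈ F
  · simp [h, hF]
  · simp [h]

lemma phi_posSemidef {V : Type*} [Fintype V] [DecidableEq V] (Δ : Finset (Finset V))
    (γ : Finset V → V → ℝ) : (phi Δ γ).PosSemidef := by
  let A : Matrix V {F // F ∈ Δ} ℝ := fun i F => if i ∈ F.1 then γ F.1 i else 0
  have h : phi Δ γ = A * Aᴴ := by
    ext i j
    simp only [phi, Matrix.of_apply, Matrix.mul_apply, Matrix.conjTranspose_apply, A,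
      star_trivial]
    rw [← Finset.sum_coe_sort Δ (fun F => if i ∈ F ∧ j ∈ F then γ F i * γ F j else 0)]
    apply Finset.sum_congr rfl
    intro F _
    by_cases hi : i ∈ F.1 <;> by_cases hj : j ∈ F.1 <;> simp [hi, hj, A, Matrix.conjTranspose, Matrix.transpose]
  rw [h]
  exact Matrix.posSemidef_self_mul_conjTranspose A

attribute [local instance] Matrix.normedAddCommGroup


/-- the image of `φ_Δ` is a closed subset of `S⪰0^m(G(Δ))`. -/
theorem image_closed_subset_psdCone (m : ℕ) (Δ : Finset (Finset (Fin m)))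
    (hΔ : IsSimplicialComplex Δ) :
    IsClosed (phiImage Δ) ∧ phiImage Δ ⊆ psdCone (underlyingGraph Δ) := by
  constructor
  · -- closedness
    apply @IsSeqClosed.isClosed _ _ (inferInstanceAs (SequentialSpace (Fin m → Fin m → ℝ)))
    intro x L hx hL
    choose γ hγ using hx
    set γ' : ℕ → Finset (Fin m) → Fin m → ℝ :=
      fun n F i => if F ∈ Δ ∧ i ∈ F then γ n F i else 0 with hγ'def
    have hphi : ∀ n, phi Δ (γ' n) = x n := fun n => (phi_trunc Δ (γ n)).trans (hγ n)
    -- the sequence x is bounded in norm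
    obtain ⟨C, hC⟩ : ∃ C, ∀ n, ‖x n‖ ≤ C := by
      have := hL.norm.bddAbove_range
      obtain ⟨C, hC⟩ := this
      exact ⟨C, fun n => hC ⟨n, rfl⟩⟩
    have hC0 : 0 ≤ C := le_trans (norm_nonneg _) (hC 0)
    -- entries of γ' are bounded
    have hbd : ∀ n, ‖γ' n‖ ≤ Real.sqrt C := by
      intro n
      rw [pi_norm_le_iff_of_nonneg (Real.sqrt_nonneg C)]
      intro F
      rw [pi_norm_le_iff_of_nonneg (Real.sqrt_nonneg C)]
      intro i
      have hsq : (γ' n F i) ^ 2 ≤ C := by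
        by_cases h : F ∈ Δ ∧ i ∈ F
        · have h1 : (γ' n F i) ^ 2 ≤ phi Δ (γ' n) i i := by
            have : phi Δ (γ' n) i i =
                ∑ G ∈ Δ, if i ∈ G ∧ i ∈ G then γ' n G i * γ' n G i else 0 := rfl
            rw [this]
            have := Finset.single_le_sum
              (f := fun G => if i ∈ G ∧ i ∈ G then γ' n G i * γ' n G i else 0)
              (fun G _ => by beta_reduce; split_ifs; exacts [mul_self_nonneg _, le_rfl]) h.1
            simpa [h.2, sq] using this
          have h2 : phi Δ (γ' n) i i ≤ C := by
            rw [hphi n]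
            calc x n i i ≤ |x n i i| := le_abs_self _
              _ ≤ ‖x n‖ := by
                  have := norm_entry_le_entrywise_sup_norm (x n) (i := i) (j := i)
                  simpa using this
              _ ≤ C := hC n
          linarith
        · simp [hγ'def, h, hC0]
      calc ‖γ' n F i‖ = Real.sqrt ((γ' n F i) ^ 2) := by
            rw [Real.sqrt_sq_eq_abs]; rfl
        _ ≤ Real.sqrt C := Real.sqrt_le_sqrt hsq
    -- extract a convergent subsequence
    have hcpt : IsCompact (Metric.closedBall (0 : Finset (Fin m) → Fin m → ℝ)
        (Real.sqrt C)) := isCompact_closedBall _ _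
    have hmem : ∀ n, γ' n ∈ Metric.closedBall (0 : Finset (Fin m) → Fin m → ℝ)
        (Real.sqrt C) := by
      intro n
      rw [Metric.mem_closedBall, dist_zero_right]
      exact hbd n
    obtain ⟨a, -, φ, hφ, hconv⟩ := hcpt.tendsto_subseq hmem
    refine ⟨a, ?_⟩
    have h1 : Filter.Tendsto (fun k => phi Δ (γ' (φ k))) Filter.atTop (nhds (phi Δ a)) :=
      ((phi_continuous Δ).continuousAt.tendsto.comp hconv)
    have h2 : Filter.Tendsto (fun k => phi Δ (γ' (φ k))) Filter.atTop (nhds L) := by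
      simp only [hphi]
      exact hL.comp hφ.tendsto_atTop
    exact tendsto_nhds_unique h1 h2
  · -- subset of psd cone
    rintro S ⟨γ, rfl⟩
    refine ⟨phi_posSemidef Δ γ, ?_⟩
    intro i j hij hadj
    have hpair : ({i, j} : Finset (Fin m)) ∉ Δ := fun h => hadj ⟨hij, h⟩
    apply Finset.sum_eq_zero
    intro F hF
    rw [if_neg]
    rintro ⟨hi, hj⟩
    exact hpair (hΔ.1 F hF {i, j} (by intro k hk; simp at hk; rcases hk with rfl | rfl <;> assumption))
end

section
/- For any simplicial complex Δ on [m], the matrices lying on the extreme rays of the convex cone im(φ_Δ) are exactly the nonzero rank-one matrices belonging to S⪰0^m(F) for some face F ∈ Δ, i.e., the matrices v vᵀ where v ∈ ℝ^m is a nonzero vector whose support is a face of Δ. -/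
open Matrix

/-- A nonzero element `x` of a convex cone `C` lies on an extreme ray of `C`
if whenever `x = y + z` with `y, z ∈ C`, both `y` and `z` are nonnegative
multiples of `x` (i.e. lie on the ray spanned by `x`). -/
def OnExtremeRay {M : Type*} [AddCommMonoid M] [Module ℝ M]
    (C : Set M) (x : M) : Prop :=
  x ∈ C ∧ x ≠ 0 ∧ ∀ y ∈ C, ∀ z ∈ C, x = y + z →
    (∃ c : ℝ, 0 ≤ c ∧ y = c • x) ∧ ∃ c : ℝ, 0 ≤ c ∧ z = c • x

section Aux

variable {m : ℕ}

lemma aux_vecMulVec_mulVec (v w : Fin m → ℝ) :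
    vecMulVec v v *ᵥ w = (v ⬝ᵥ w) • v := by
  ext i
  simp only [mulVec, dotProduct, vecMulVec_apply, Pi.smul_apply, smul_eq_mul]
  rw [Finset.sum_mul]
  exact Finset.sum_congr rfl fun j _ => by ring

lemma aux_vecMulVec_posSemidef (v : Fin m → ℝ) : (vecMulVec v v).PosSemidef := by
  refine PosSemidef.of_dotProduct_mulVec_nonneg ?_ ?_
  · ext i j
    simp [conjTranspose_apply, vecMulVec_apply, mul_comm]
  · intro x
    rw [aux_vecMulVec_mulVec]
    have : star x ⬝ᵥ (v ⬝ᵥ x) • v = (v ⬝ᵥ x) * (v ⬝ᵥ x) := by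
      simp [dotProduct_smul, smul_eq_mul, star_trivial, dotProduct_comm x v]
    rw [this]
    exact mul_self_nonneg _

lemma aux_phi_eq_sum (Δ : Finset (Finset (Fin m))) (γ : Finset (Fin m) → Fin m → ℝ) :
    phi Δ γ = ∑ F ∈ Δ, vecMulVec (fun i => if i ∈ F then γ F i else 0)
      (fun i => if i ∈ F then γ F i else 0) := by
  ext i j
  rw [Matrix.sum_apply]
  simp only [phi, of_apply, vecMulVec_apply]
  refine Finset.sum_congr rfl fun F _ => ?_
  by_cases hi : i ∈ F <;> by_cases hj : j ∈ F <;> simp [hi, hj]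

lemma aux_mem_phiImage_posSemidef {Δ : Finset (Finset (Fin m))}
    {S : Matrix (Fin m) (Fin m) ℝ} (hS : S ∈ phiImage Δ) : S.PosSemidef := by
  obtain ⟨γ, rfl⟩ := hS
  rw [aux_phi_eq_sum]
  exact Finset.sum_induction _ _ (fun a b ha hb => ha.add hb) .zero
    (fun F _ => aux_vecMulVec_posSemidef _)

lemma aux_perp_span {v a : Fin m → ℝ} (hvv : v ⬝ᵥ v ≠ 0)
    (h : ∀ w, v ⬝ᵥ w = 0 → a ⬝ᵥ w = 0) : a = (a ⬝ᵥ v / (v ⬝ᵥ v)) • v := by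
  set c := a ⬝ᵥ v / (v ⬝ᵥ v) with hc
  have hw : v ⬝ᵥ (a - c • v) = 0 := by
    rw [dotProduct_sub, dotProduct_smul, smul_eq_mul, hc, dotProduct_comm v a]
    field_simp
    ring
  have h1 : a ⬝ᵥ (a - c • v) = 0 := h _ hw
  have h2 : (c • v) ⬝ᵥ (a - c • v) = 0 := by
    rw [smul_dotProduct, hw, smul_zero]
  have h3 : (a - c • v) ⬝ᵥ (a - c • v) = 0 := by
    rw [sub_dotProduct, h1, h2, sub_zero]
  exact sub_eq_zero.mp (dotProduct_self_eq_zero.mp h3)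

lemma aux_rankOne_split {v : Fin m → ℝ} (hv : v ≠ 0) {Y Z : Matrix (Fin m) (Fin m) ℝ}
    (hY : Y.PosSemidef) (hZ : Z.PosSemidef) (h : vecMulVec v v = Y + Z) :
    ∃ c : ℝ, 0 ≤ c ∧ Y = c • vecMulVec v v := by
  have hvv : v ⬝ᵥ v ≠ 0 := fun h0 => hv (dotProduct_self_eq_zero.mp h0)
  -- the kernel of Y contains the orthogonal complement of v
  have hker : ∀ w, v ⬝ᵥ w = 0 → Y *ᵥ w = 0 := by
    intro w hw
    have hq : w ⬝ᵥ (vecMulVec v v *ᵥ w) = 0 := by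
      rw [aux_vecMulVec_mulVec, hw, zero_smul, dotProduct_zero]
    rw [h, add_mulVec, dotProduct_add] at hq
    have hY' : (0:ℝ) ≤ w ⬝ᵥ (Y *ᵥ w) := by simpa [star_trivial] using hY.dotProduct_mulVec_nonneg w
    have hZ' : (0:ℝ) ≤ w ⬝ᵥ (Z *ᵥ w) := by simpa [star_trivial] using hZ.dotProduct_mulVec_nonneg w
    have hYw : w ⬝ᵥ (Y *ᵥ w) = 0 := by linarith
    have := (hY.dotProduct_mulVec_zero_iff w).mp (by simpa [star_trivial] using hYw)
    exact this
  -- every row of Y is a multiple of v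
  set t : Fin m → ℝ := fun i => ((fun j => Y i j) ⬝ᵥ v) / (v ⬝ᵥ v) with ht
  have hrow : ∀ i j, Y i j = t i * v j := by
    intro i j
    have hperp : ∀ w, v ⬝ᵥ w = 0 → (fun j => Y i j) ⬝ᵥ w = 0 := by
      intro w hw
      have := hker w hw
      have : (Y *ᵥ w) i = 0 := by rw [this]; rfl
      simpa [mulVec, dotProduct] using this
    have := aux_perp_span hvv hperp
    exact congrFun this j
  -- symmetry of Y
  have hsym : ∀ i j, Y i j = Y j i := fun i j => by
    simpa [star_trivial] using hY.1.apply j i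
  obtain ⟨j₀, hj₀⟩ := Function.ne_iff.mp hv
  have hj₀' : v j₀ ≠ 0 := by simpa using hj₀
  set c : ℝ := t j₀ / v j₀ with hcdef
  have htc : ∀ i, t i = c * v i := by
    intro i
    have h1 : t i * v j₀ = t j₀ * v i := by
      rw [← hrow i j₀, hsym i j₀, hrow j₀ i]
    rw [hcdef, div_mul_eq_mul_div, ← h1, mul_div_assoc, div_self hj₀', mul_one]
  have hYc : Y = c • vecMulVec v v := by
    ext i j
    rw [hrow i j, htc i]
    simp [vecMulVec_apply, smul_eq_mul]
    ring
  refine ⟨c, ?_, hYc⟩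
  -- nonnegativity of c from the diagonal entry at j₀
  have hdiag : (0:ℝ) ≤ Y j₀ j₀ := by
    have := hY.dotProduct_mulVec_nonneg (Pi.single j₀ 1)
    simpa [star_trivial, mulVec, dotProduct, Pi.single_apply] using this
  have : Y j₀ j₀ = c * (v j₀ * v j₀) := by rw [hrow j₀ j₀, htc j₀]; ring
  rw [this] at hdiag
  have hpos : 0 < v j₀ * v j₀ := mul_self_pos.mpr hj₀'
  nlinarith [hdiag, hpos]

lemma aux_vecMulVec_mem_phiImage {Δ : Finset (Finset (Fin m))} {F₀ : Finset (Fin m)}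
    (hF₀ : F₀ ∈ Δ) {u : Fin m → ℝ} (hu : ∀ i, i ∉ F₀ → u i = 0) :
    vecMulVec u u ∈ phiImage Δ := by
  refine ⟨fun F i => if F = F₀ then u i else 0, ?_⟩
  ext i j
  simp only [phi, of_apply, vecMulVec_apply]
  rw [Finset.sum_eq_single_of_mem F₀ hF₀]
  · by_cases hi : i ∈ F₀ <;> by_cases hj : j ∈ F₀
    · simp [hi, hj]
    · simp [hi, hj, hu j hj]
    · simp [hi, hj, hu i hi]
    · simp [hi, hj, hu i hi]
  · intro F _ hF
    simp [hF]

end Aux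

/-- the matrices on extreme rays of `im(φ_Δ)` are exactly the
nonzero rank-one matrices `v vᵀ` whose support is a face of `Δ`. -/
theorem onExtremeRay_iff_rank_one_face (m : ℕ) (Δ : Finset (Finset (Fin m)))
    (hΔ : IsSimplicialComplex Δ) (S : Matrix (Fin m) (Fin m) ℝ) :
    OnExtremeRay (phiImage Δ) S ↔
      ∃ v : Fin m → ℝ, v ≠ 0 ∧
        (Finset.univ.filter fun i => v i ≠ 0) ∈ Δ ∧
        S = Matrix.vecMulVec v v := by
  constructor
  · rintro ⟨⟨γ, hγ⟩, hS0, hext⟩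
    -- find a nonzero entry and a face giving a nonzero contribution
    have hij : ∃ i j, S i j ≠ 0 := by
      by_contra hc
      push_neg at hc
      exact hS0 (by ext i j; exact hc i j)
    obtain ⟨i, j, hij⟩ := hij
    have hF : ∃ F₀ ∈ Δ, (if i ∈ F₀ ∧ j ∈ F₀ then γ F₀ i * γ F₀ j else 0) ≠ 0 := by
      by_contra hc
      push_neg at hc
      apply hij
      rw [← hγ]
      simp only [phi, of_apply]
      exact Finset.sum_eq_zero hc
    obtain ⟨F₀, hF₀, hne⟩ := hF
    rw [ne_eq, ite_eq_right_iff, not_forall] at hne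
    obtain ⟨⟨hiF, hjF⟩, hprod⟩ := hne
    set u : Fin m → ℝ := fun k => if k ∈ F₀ then γ F₀ k else 0 with hu
    have hui : u i ≠ 0 := by
      simp only [hu, if_pos hiF]
      exact fun h0 => hprod (by rw [h0, zero_mul])
    have huj : u j ≠ 0 := by
      simp only [hu, if_pos hjF]
      exact fun h0 => hprod (by rw [h0, mul_zero])
    -- split phi γ as single face plus rest
    have h1 : phi Δ (fun F => if F = F₀ then γ F₀ else 0) = vecMulVec u u := by
      ext a b
      simp only [phi, of_apply, vecMulVec_apply]
      rw [Finset.sum_eq_single_of_mem F₀ hF₀]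
      · by_cases ha : a ∈ F₀ <;> by_cases hb : b ∈ F₀ <;> simp [hu, ha, hb]
      · intro F _ hF
        simp [hF]
    have hsplit : S = vecMulVec u u + phi Δ (fun F => if F = F₀ then 0 else γ F) := by
      rw [← h1, ← hγ]
      ext a b
      simp only [phi, Matrix.add_apply, of_apply, ← Finset.sum_add_distrib]
      refine Finset.sum_congr rfl fun F _ => ?_
      by_cases hF : F = F₀ <;> split_ifs with h' <;> simp [hF]
    have hmem1 : vecMulVec u u ∈ phiImage Δ := ⟨_, h1⟩
    have hmem2 : phi Δ (fun F => if F = F₀ then 0 else γ F) ∈ phiImage Δ := ⟨_, rfl⟩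
    obtain ⟨⟨c, hc0, hc⟩, -⟩ := hext _ hmem1 _ hmem2 hsplit
    -- c is positive
    have hab : ∀ a b, u a * u b = c * S a b := by
      intro a b
      have := congrFun (congrFun hc a) b
      simpa [vecMulVec_apply, smul_eq_mul] using this
    have hcne : c ≠ 0 := by
      intro h0
      have := hab i j
      rw [h0, zero_mul] at this
      exact hui (by rcases mul_eq_zero.mp this with h | h; exact h; exact absurd h huj)
    have hcpos : 0 < c := lt_of_le_of_ne hc0 (Ne.symm hcne)
    set s : ℝ := Real.sqrt c with hs
    have hspos : 0 < s := Real.sqrt_pos.mpr hcpos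
    have hs2 : s * s = c := Real.mul_self_sqrt hc0
    refine ⟨s⁻¹ • u, ?_, ?_, ?_⟩
    · intro h0
      have : (s⁻¹ • u) i = 0 := by rw [h0]; rfl
      rw [Pi.smul_apply, smul_eq_mul] at this
      rcases mul_eq_zero.mp this with h' | h'
      · exact (inv_ne_zero hspos.ne') h'
      · exact hui h'
    · refine hΔ.1 F₀ hF₀ _ ?_
      intro k hk
      simp only [Finset.mem_filter, Finset.mem_univ, true_and, Pi.smul_apply,
        smul_eq_mul] at hk
      by_contra hkF
      exact hk (by rw [hu]; simp [hkF])
    · ext a b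
      rw [vecMulVec_apply, Pi.smul_apply, Pi.smul_apply, smul_eq_mul, smul_eq_mul]
      have := hab a b
      have hcalc : s⁻¹ * u a * (s⁻¹ * u b) = c⁻¹ * (c * S a b) := by
        rw [← this, ← hs2]
        field_simp
      rw [hcalc, ← mul_assoc, inv_mul_cancel₀ hcne, one_mul]
  · rintro ⟨v, hv, hF, rfl⟩
    obtain ⟨i0, hi0⟩ := Function.ne_iff.mp hv
    have hu : ∀ i, i ∉ (Finset.univ.filter fun i => v i ≠ 0) → v i = 0 := by
      intro i hi
      by_contra h0
      exact hi (Finset.mem_filter.mpr ⟨Finset.mem_univ i, h0⟩)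
    refine ⟨aux_vecMulVec_mem_phiImage hF hu, ?_, ?_⟩
    · intro h0
      have : vecMulVec v v i0 i0 = 0 := by rw [h0]; rfl
      rw [vecMulVec_apply] at this
      exact hi0 (by rcases mul_eq_zero.mp this with h | h <;> exact h)
    · intro y hy z hz hsum
      have hY := aux_mem_phiImage_posSemidef hy
      have hZ := aux_mem_phiImage_posSemidef hz
      exact ⟨aux_rankOne_split hv hY hZ hsum,
        aux_rankOne_split hv hZ hY (by rw [hsum, add_comm])⟩
end

section
/- Let G be a graph with vertex set [m] and let Δ be its edge complex, consisting of the empty set, the singletons {i} for i ∈ [m], and the edges of G. The map φ_Δ is surjective onto S⪰0^m(G) if and only if G is a forest (contains no cycles). -/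
open Matrix

set_option maxHeartbeats 1600000
set_option linter.unusedSectionVars false

section QuadHelpers
variable {V : Type*} [Fintype V] [DecidableEq V]

/-- indicator vector -/
noncomputable def ind (p : V) : V → ℝ := fun i => if i = p then 1 else 0

lemma dot_expand (S : Matrix V V ℝ) (x y : V → ℝ) :
    x ⬝ᵥ S *ᵥ y = ∑ i, ∑ j, x i * S i j * y j := by
  simp [dotProduct, Matrix.mulVec, Finset.mul_sum, mul_assoc]

lemma posSemidef_of (S : Matrix V V ℝ) (hsym : ∀ i j, S i j = S j i)
    (hpos : ∀ x : V → ℝ, 0 ≤ ∑ i, ∑ j, x i * S i j * x j) : S.PosSemidef := by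
  rw [Matrix.posSemidef_iff_dotProduct_mulVec]
  constructor
  · ext i j
    simp [Matrix.conjTranspose_apply, hsym i j]
  · intro x
    have : star x = x := by funext i; simp
    rw [this, dot_expand]
    exact hpos x

lemma psd_sym {S : Matrix V V ℝ} (h : S.PosSemidef) (i j : V) : S i j = S j i := by
  have := h.1
  conv_lhs => rw [← this]
  simp [Matrix.conjTranspose_apply]

lemma psd_quad_nonneg {S : Matrix V V ℝ} (h : S.PosSemidef) (x : V → ℝ) :
    0 ≤ ∑ i, ∑ j, x i * S i j * x j := by
  have h2 := h.dotProduct_mulVec_nonneg x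
  have hs : star x = x := by funext i; simp
  rwa [hs, dot_expand] at h2

lemma ssc (f : V → V → ℝ) (c : ℝ) :
    (∑ i, ∑ j, f i j) * c = ∑ i, ∑ j, f i j * c := by
  rw [Finset.sum_mul]
  exact Finset.sum_congr rfl (fun i _ => Finset.sum_mul _ _ _)

lemma psd_cauchy {S : Matrix V V ℝ} (h : S.PosSemidef) (x y : V → ℝ) :
    (∑ i, ∑ j, x i * S i j * y j)^2 ≤
      (∑ i, ∑ j, x i * S i j * x j) * (∑ i, ∑ j, y i * S i j * y j) := by
  have hBsym : (∑ i, ∑ j, y i * S i j * x j) = (∑ i, ∑ j, x i * S i j * y j) := by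
    rw [Finset.sum_comm]
    apply Finset.sum_congr rfl; intro i _
    apply Finset.sum_congr rfl; intro j _
    rw [psd_sym h j i]; ring
  have hq : ∀ t : ℝ, 0 ≤ (∑ i, ∑ j, y i * S i j * y j) * (t * t) +
      (2 * (∑ i, ∑ j, x i * S i j * y j)) * t + (∑ i, ∑ j, x i * S i j * x j) := by
    intro t
    have h0 := psd_quad_nonneg h (fun i => x i + t * y i)
    have key : (∑ i, ∑ j, (x i + t * y i) * S i j * (x j + t * y j)) =
        (∑ i, ∑ j, y i * S i j * y j) * (t * t) +
        ((∑ i, ∑ j, x i * S i j * y j) + (∑ i, ∑ j, y i * S i j * x j)) * t +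
        (∑ i, ∑ j, x i * S i j * x j) := by
      rw [ssc (fun i j => y i * S i j * y j) (t * t), add_mul,
        ssc (fun i j => x i * S i j * y j) t, ssc (fun i j => y i * S i j * x j) t]
      simp only [← Finset.sum_add_distrib]
      apply Finset.sum_congr rfl; intro i _
      apply Finset.sum_congr rfl; intro j _
      ring
    rw [hBsym] at key
    have : ((∑ i, ∑ j, x i * S i j * y j) + (∑ i, ∑ j, x i * S i j * y j)) * t
        = (2 * (∑ i, ∑ j, x i * S i j * y j)) * t := by ring
    rw [this] at key
    rw [← key]
    exact h0
  have hd := discrim_le_zero hq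
  rw [discrim] at hd
  nlinarith [hd]

lemma sum_ind_right (S : Matrix V V ℝ) (x : V → ℝ) (p : V) :
    ∑ i, ∑ j, x i * S i j * ind p j = ∑ i, x i * S i p := by
  apply Finset.sum_congr rfl; intro i _
  simp [ind, mul_ite, mul_one, mul_zero, Finset.sum_ite_eq']

lemma quad_ind (S : Matrix V V ℝ) (p : V) :
    ∑ i, ∑ j, ind p i * S i j * ind p j = S p p := by
  rw [sum_ind_right]
  simp [ind, ite_mul, one_mul, zero_mul, Finset.sum_ite_eq']

lemma psd_entry_sq {S : Matrix V V ℝ} (h : S.PosSemidef) (p q : V) :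
    S p q ^ 2 ≤ S p p * S q q := by
  have := psd_cauchy h (ind p) (ind q)
  rw [sum_ind_right, quad_ind, quad_ind] at this
  rwa [show (∑ i, ind p i * S i q) = S p q from by
    simp [ind, ite_mul, one_mul, zero_mul, Finset.sum_ite_eq']] at this

lemma psd_diag_nonneg {S : Matrix V V ℝ} (h : S.PosSemidef) (p : V) : 0 ≤ S p p := by
  have := psd_quad_nonneg h (ind p)
  rwa [quad_ind] at this

lemma psd_entry_zero {S : Matrix V V ℝ} (h : S.PosSemidef) {p q : V} (hp : S p p = 0) :
    S p q = 0 := by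
  have h1 := psd_entry_sq h p q
  rw [hp, zero_mul] at h1
  nlinarith [sq_nonneg (S p q)]

lemma sumsq (T : Finset ℕ) (f : ℕ → V → ℝ) (x : V → ℝ) :
    ∑ i, ∑ j, x i * (∑ t ∈ T, f t i * f t j) * x j = ∑ t ∈ T, (∑ i, f t i * x i)^2 := by
  have h1 : ∀ i : V, (∑ j, ∑ t ∈ T, x i * (f t i * f t j) * x j)
      = ∑ t ∈ T, ∑ j, x i * (f t i * f t j) * x j := fun i => Finset.sum_comm
  calc ∑ i, ∑ j, x i * (∑ t ∈ T, f t i * f t j) * x j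
      = ∑ i, ∑ j, ∑ t ∈ T, x i * (f t i * f t j) * x j := by
        apply Finset.sum_congr rfl; intro i _
        apply Finset.sum_congr rfl; intro j _
        rw [Finset.mul_sum, Finset.sum_mul]
    _ = ∑ i : V, ∑ t ∈ T, ∑ j, x i * (f t i * f t j) * x j := by
        apply Finset.sum_congr rfl; intro i _; exact h1 i
    _ = ∑ t ∈ T, ∑ i, ∑ j, x i * (f t i * f t j) * x j := Finset.sum_comm
    _ = ∑ t ∈ T, (∑ i, f t i * x i)^2 := by
        apply Finset.sum_congr rfl; intro t _
        rw [sq, Finset.sum_mul_sum]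
        apply Finset.sum_congr rfl; intro i _
        apply Finset.sum_congr rfl; intro j _
        ring

end QuadHelpers

section PhiHelpers
variable {V : Type*} [Fintype V] [DecidableEq V]

lemma phi_apply (Δ : Finset (Finset V)) (γ : Finset V → V → ℝ) (i j : V) :
    phi Δ γ i j = ∑ F ∈ Δ, if i ∈ F ∧ j ∈ F then γ F i * γ F j else 0 := rfl

lemma phi_symm (Δ : Finset (Finset V)) (γ : Finset V → V → ℝ) (i j : V) :
    phi Δ γ i j = phi Δ γ j i := by
  rw [phi_apply, phi_apply]
  apply Finset.sum_congr rfl; intro F _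
  by_cases h1 : i ∈ F <;> by_cases h2 : j ∈ F <;> simp [h1, h2, mul_comm]

lemma phi_quad (Δ : Finset (Finset V)) (γ : Finset V → V → ℝ) (x : V → ℝ) :
    ∑ i, ∑ j, x i * phi Δ γ i j * x j
      = ∑ F ∈ Δ, (∑ i, if i ∈ F then γ F i * x i else 0)^2 := by
  have step1 : ∀ i j : V, x i * phi Δ γ i j * x j
      = ∑ F ∈ Δ, (if i ∈ F then γ F i * x i else 0) * (if j ∈ F then γ F j * x j else 0) := by
    intro i j
    rw [phi_apply, Finset.mul_sum, Finset.sum_mul]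
    apply Finset.sum_congr rfl; intro F _
    by_cases h1 : i ∈ F <;> by_cases h2 : j ∈ F <;> simp [h1, h2] <;> ring
  calc ∑ i, ∑ j, x i * phi Δ γ i j * x j
      = ∑ i, ∑ j, ∑ F ∈ Δ, (if i ∈ F then γ F i * x i else 0) *
          (if j ∈ F then γ F j * x j else 0) := by
        apply Finset.sum_congr rfl; intro i _
        apply Finset.sum_congr rfl; intro j _
        exact step1 i j
    _ = ∑ i : V, ∑ F ∈ Δ, ∑ j, (if i ∈ F then γ F i * x i else 0) *
          (if j ∈ F then γ F j * x j else 0) := by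
        apply Finset.sum_congr rfl; intro i _
        exact Finset.sum_comm
    _ = ∑ F ∈ Δ, ∑ i, ∑ j, (if i ∈ F then γ F i * x i else 0) *
          (if j ∈ F then γ F j * x j else 0) := Finset.sum_comm
    _ = ∑ F ∈ Δ, (∑ i, if i ∈ F then γ F i * x i else 0)^2 := by
        apply Finset.sum_congr rfl; intro F _
        rw [sq, Finset.sum_mul_sum]

end PhiHelpers

/-- 2x2 psd decomposition -/
lemma two_by_two {α β δ : ℝ} (hα : 0 ≤ α) (hδ : 0 ≤ δ) (h : β^2 ≤ α*δ) :
    ∃ fp fq bp bq : ℝ, fp*fq = β ∧ fp^2+bp^2 = α ∧ fq^2+bq^2 = δ := by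
  rcases eq_or_lt_of_le hα with h0 | h0
  · have hβ : β = 0 := by nlinarith
    exact ⟨0, 0, 0, Real.sqrt δ, by simp [hβ], by simp [← h0], by
      simp [Real.sq_sqrt hδ]⟩
  · have hsq : Real.sqrt α ^ 2 = α := Real.sq_sqrt (le_of_lt h0)
    have hsne : Real.sqrt α ≠ 0 := by positivity
    have hβα : 0 ≤ δ - β^2/α := by
      rw [sub_nonneg, div_le_iff₀ h0]
      nlinarith
    refine ⟨Real.sqrt α, β / Real.sqrt α, 0, Real.sqrt (δ - β^2/α), ?_, ?_, ?_⟩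
    · field_simp
    · simpa using hsq
    · rw [div_pow, hsq, Real.sq_sqrt hβα]; ring

open Matrix Finset SimpleGraph

lemma getVert_eq_support_getElem {V : Type*} {G : SimpleGraph V} {u v : V}
    (w : G.Walk u v) {i : ℕ} (h : i ≤ w.length) :
    w.getVert i = w.support[i]'(by rw [SimpleGraph.Walk.length_support]; omega) := by
  induction w generalizing i with
  | nil =>
    have : i = 0 := by simpa using h
    subst this
    simp [SimpleGraph.Walk.getVert]
  | cons h' p ih =>
    cases i with
    | zero => simp [SimpleGraph.Walk.getVert]
    | succ n =>
      have hih := ih (show n ≤ p.length by simpa using h)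
      simp [SimpleGraph.Walk.getVert_cons_succ, SimpleGraph.Walk.support_cons, hih]

/-- injectivity of getVert on a cycle, for indices in [1, k] -/
lemma cycle_getVert_inj {V : Type*} {G : SimpleGraph V} {v : V}
    {w : G.Walk v v} (hw : w.IsCycle) {i j : ℕ}
    (hi1 : 1 ≤ i) (hik : i ≤ w.length) (hj1 : 1 ≤ j) (hjk : j ≤ w.length)
    (hij : w.getVert i = w.getVert j) : i = j := by
  have htail : w.support.tail.Nodup := hw.support_nodup
  have hlen : w.support.length = w.length + 1 := SimpleGraph.Walk.length_support w
  have hlt : w.support.tail.length = w.length := by simp [hlen]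
  have hgi : w.getVert i = w.support.tail[i-1]'(by omega) := by
    rw [getVert_eq_support_getElem w hik, List.getElem_tail]
    congr 1; omega
  have hgj : w.getVert j = w.support.tail[j-1]'(by omega) := by
    rw [getVert_eq_support_getElem w hjk, List.getElem_tail]
    congr 1; omega
  rw [hgi, hgj] at hij
  have := (List.Nodup.getElem_inj_iff htail).1 hij
  omega

lemma cycle_getVert_ne_zero {V : Type*} {G : SimpleGraph V} {v : V}
    {w : G.Walk v v} (hw : w.IsCycle) {j : ℕ} (hj1 : 1 ≤ j) (hjk : j < w.length) :
    w.getVert j ≠ w.getVert 0 := by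
  intro hcon
  have h0 : w.getVert 0 = w.getVert w.length := by
    rw [SimpleGraph.Walk.getVert_zero, SimpleGraph.Walk.getVert_length]
  have hk1 : 1 ≤ w.length := le_trans hj1 (le_of_lt hjk)
  have := cycle_getVert_inj hw hj1 (le_of_lt hjk) hk1 (le_refl _) (by rw [hcon, h0])
  omega

/-- an acyclic graph with an edge has a leaf -/
lemma exists_leaf {V : Type*} [Fintype V] [DecidableEq V] {H : SimpleGraph V}
    (hH : H.IsAcyclic) {a b : V} (hab : H.Adj a b) :
    ∃ p q, H.Adj p q ∧ ∀ r, H.Adj p r → r = q := by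
  classical
  let P : ℕ → Prop := fun n => ∃ (u v : V) (w : H.Walk u v), w.IsPath ∧ w.length = n
  have hP1 : P 1 := ⟨a, b, SimpleGraph.Walk.cons hab SimpleGraph.Walk.nil, by
    simp [SimpleGraph.Walk.isPath_def, hab.ne], rfl⟩
  have hbound : ∀ n, P n → n < Fintype.card V := by
    rintro n ⟨u, v, w, hw, rfl⟩; exact hw.length_lt
  set N := Fintype.card V with hN
  have h1N : 1 ≤ N := le_of_lt (hbound 1 hP1)
  set n := Nat.findGreatest P N with hn
  have hPn : P n := Nat.findGreatest_spec h1N hP1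
  have hn1 : 1 ≤ n := Nat.le_findGreatest h1N hP1
  have hmax : ¬ P (n+1) := by
    intro hp
    exact Nat.findGreatest_is_greatest (by omega) (le_of_lt (hbound _ hp)) hp
  obtain ⟨u, v, w, hw, hlen⟩ := hPn
  have hnotnil : ¬w.Nil := by
    intro hnil
    rw [SimpleGraph.Walk.nil_iff_length_eq] at hnil
    omega
  refine ⟨u, w.getVert 1, w.adj_snd hnotnil, ?_⟩
  intro r hr
  by_contra hrq
  by_cases hrs : r ∈ w.support
  · -- r in support: build a cycle
    set w1 := w.takeUntil r hrs with hw1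
    have hw1path : w1.IsPath := hw.takeUntil hrs
    have hur : u ≠ r := hr.ne
    have hnotnil1 : ¬w1.Nil := SimpleGraph.Walk.not_nil_of_ne hur
    have hlen1 : 1 ≤ w1.length := by
      rcases Nat.eq_zero_or_pos w1.length with h0 | h0
      · exact absurd ((SimpleGraph.Walk.nil_iff_length_eq).2 h0) hnotnil1
      · omega
    -- first vertex of w1 equals first vertex of w, unless w1 has length 1
    have hspec := w.take_spec hrs
    have hg1 : w1.getVert 1 = w.getVert 1 := by
      by_cases hl1 : w1.length = 1
      · exfalso
        apply hrq
        have : w.getVert 1 = (w1.append (w.dropUntil r hrs)).getVert 1 := by rw [hspec]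
        rw [SimpleGraph.Walk.getVert_append] at this
        rw [this]
        simp [hl1]
      · have : w.getVert 1 = (w1.append (w.dropUntil r hrs)).getVert 1 := by rw [hspec]
        rw [SimpleGraph.Walk.getVert_append] at this
        rw [this, if_pos (by omega)]
    have hrg1 : r ≠ w1.getVert 1 := by rw [hg1]; exact hrq
    -- decompose w1
    have hdecomp := w1.cons_tail_eq hnotnil1
    have hpathcons : (SimpleGraph.Walk.cons (w1.adj_snd hnotnil1) w1.tail).IsPath := by
      rw [hdecomp]; exact hw1path
    have hunotmem : u ∉ w1.tail.support :=
      ((SimpleGraph.Walk.cons_isPath_iff _ _).1 hpathcons).2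
    have hedge : s(r, u) ∉ w1.edges := by
      intro hmem
      rw [← hdecomp, SimpleGraph.Walk.edges_cons] at hmem
      rcases List.mem_cons.1 hmem with hc | hc
      · rw [Sym2.eq_iff] at hc
        rcases hc with ⟨h1, h2⟩ | ⟨h1, h2⟩
        · exact hur h1.symm
        · exact hrg1 h1
      · exact hunotmem (SimpleGraph.Walk.snd_mem_support_of_mem_edges _ hc)
    have hcyc := SimpleGraph.Path.cons_isCycle ⟨w1, hw1path⟩ hr.symm hedge
    exact hH _ hcyc
  · -- r not in support: extend the path
    apply hmax
    exact ⟨r, v, SimpleGraph.Walk.cons hr.symm w, hw.cons hrs, by simp [hlen]⟩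

lemma two_by_two' {α β δ : ℝ} (hα : 0 ≤ α) (hδ : 0 ≤ δ) (h : β^2 ≤ α*δ) :
    ∃ fp fq bp bq : ℝ, fp*fq = β ∧ fp^2+bp^2 = α ∧ fq^2+bq^2 = δ := by
  rcases eq_or_lt_of_le hα with h0 | h0
  · have hβ : β = 0 := by nlinarith
    exact ⟨0, 0, 0, Real.sqrt δ, by simp [hβ], by simp [← h0], by simp [Real.sq_sqrt hδ]⟩
  · have hsq : Real.sqrt α ^ 2 = α := Real.sq_sqrt (le_of_lt h0)
    have hsne : Real.sqrt α ≠ 0 := by positivity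
    have hβα : 0 ≤ δ - β^2/α := by
      rw [sub_nonneg, div_le_iff₀ h0]; nlinarith
    refine ⟨Real.sqrt α, β / Real.sqrt α, 0, Real.sqrt (δ - β^2/α), ?_, ?_, ?_⟩
    · field_simp
    · simpa using hsq
    · rw [div_pow, hsq, Real.sq_sqrt hβα]; ring

/-- adding a rank one supported on an edge to the image of phi -/
lemma add_rankone {V : Type*} [Fintype V] [DecidableEq V] (Δ : Finset (Finset V))
    {p q : V} (hne : p ≠ q)
    (hF0 : ({p, q} : Finset V) ∈ Δ) (hFp : ({p} : Finset V) ∈ Δ)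
    (hFq : ({q} : Finset V) ∈ Δ)
    (γ' : Finset V → V → ℝ) (c : V → ℝ) (hc : ∀ i, i ≠ p → i ≠ q → c i = 0) :
    ∃ γ, ∀ i j, phi Δ γ i j = phi Δ γ' i j + c i * c j := by
  classical
  have hd1 : ({p, q} : Finset V) ≠ {p} := by
    intro h
    have : q ∈ ({p} : Finset V) := h ▸ (by simp : q ∈ ({p, q} : Finset V))
    exact hne.symm (by simpa using this)
  have hd2 : ({p, q} : Finset V) ≠ {q} := by
    intro h
    have : p ∈ ({q} : Finset V) := h ▸ (by simp : p ∈ ({p, q} : Finset V))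
    exact hne (by simpa using this)
  have hd3 : ({p} : Finset V) ≠ {q} := by
    intro h
    have : p ∈ ({q} : Finset V) := h ▸ (by simp : p ∈ ({p} : Finset V))
    exact hne (by simpa using this)
  set ep := γ' {p, q} p with hep
  set eq' := γ' {p, q} q with heq'
  set ap := γ' {p} p with hap
  set aq := γ' {q} q with haq
  have hcs : (ep*eq' + c p * c q)^2 ≤ (ep^2 + ap^2 + c p^2) * (eq'^2 + aq^2 + c q^2) := by
    nlinarith [sq_nonneg (ep * c q - eq' * c p), sq_nonneg (ep * aq), sq_nonneg (eq' * ap),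
      sq_nonneg (ap * c q), sq_nonneg (aq * c p), sq_nonneg (ap * aq)]
  obtain ⟨fp, fq, bp, bq, hf, hαa, hδa⟩ :=
    two_by_two' (by positivity) (by positivity) hcs
  set γ : Finset V → V → ℝ := fun F i => if F = {p, q} then (if i = p then fp else if i = q then fq else 0)
    else if F = {p} then (if i = p then bp else 0)
    else if F = {q} then (if i = q then bq else 0)
    else γ' F i with hγ
  refine ⟨γ, ?_⟩
  have conv0 : ∀ (g : Finset V → V → ℝ) (F : Finset V) (i j : V),
      (if i ∈ F ∧ j ∈ F then g F i * g F j else 0)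
        = (if i ∈ F then g F i else 0) * (if j ∈ F then g F j else 0) := by
    intro g F i j
    by_cases h1 : i ∈ F <;> by_cases h2 : j ∈ F <;> simp [h1, h2]
  -- evaluation of the six coordinate functions
  have ev0 : ∀ i : V, (if i ∈ ({p, q} : Finset V) then γ {p, q} i else 0)
      = (if i = p then fp else if i = q then fq else 0) := by
    intro i
    by_cases h1 : i = p <;> by_cases h2 : i = q <;>
      simp [hγ, h1, h2, hne, hne.symm, Finset.mem_insert, Finset.mem_singleton]
  have ev0' : ∀ i : V, (if i ∈ ({p, q} : Finset V) then γ' {p, q} i else 0)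
      = (if i = p then ep else if i = q then eq' else 0) := by
    intro i
    by_cases h1 : i = p <;> by_cases h2 : i = q <;>
      simp [h1, h2, hne, hne.symm, Finset.mem_insert, Finset.mem_singleton, hep, heq']
  have evp : ∀ i : V, (if i ∈ ({p} : Finset V) then γ {p} i else 0)
      = (if i = p then bp else 0) := by
    intro i
    by_cases h1 : i = p <;> simp [hγ, h1, hne, hne.symm, hd1.symm, Finset.mem_singleton]
  have evp' : ∀ i : V, (if i ∈ ({p} : Finset V) then γ' {p} i else 0)
      = (if i = p then ap else 0) := by
    intro i
    by_cases h1 : i = p <;> simp [h1, hne, hne.symm, Finset.mem_singleton, hap]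
  have evq : ∀ i : V, (if i ∈ ({q} : Finset V) then γ {q} i else 0)
      = (if i = q then bq else 0) := by
    intro i
    by_cases h1 : i = q <;> simp [hγ, h1, hne, hne.symm, hd2.symm, hd3, Finset.mem_singleton]
  have evq' : ∀ i : V, (if i ∈ ({q} : Finset V) then γ' {q} i else 0)
      = (if i = q then aq else 0) := by
    intro i
    by_cases h1 : i = q <;> simp [h1, hne, hne.symm, Finset.mem_singleton, haq]
  intro i j
  have key : (∑ F ∈ Δ, ((if i ∈ F ∧ j ∈ F then γ F i * γ F j else 0)
      - (if i ∈ F ∧ j ∈ F then γ' F i * γ' F j else 0))) = c i * c j := by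
    have hsub : ({({p, q} : Finset V), {p}, {q}} : Finset (Finset V)) ⊆ Δ := by
      intro F hF
      simp only [Finset.mem_insert, Finset.mem_singleton] at hF
      rcases hF with rfl | rfl | rfl
      exacts [hF0, hFp, hFq]
    rw [← Finset.sum_subset hsub (fun F hFΔ hFs => ?_)]
    swap
    · have h1 : F ≠ {p, q} := fun h => hFs (by simp [h])
      have h2 : F ≠ ({p} : Finset V) := fun h => hFs (by simp [h])
      have h3 : F ≠ ({q} : Finset V) := fun h => hFs (by simp [h])
      have : γ F = γ' F := by funext x; simp [hγ, h1, h2, h3]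
      rw [this, sub_self]
    · rw [Finset.sum_insert (by simp [hd1, hd2]), Finset.sum_insert (by simp [hd3]),
        Finset.sum_singleton]
      rw [conv0 γ, conv0 γ', conv0 γ, conv0 γ', conv0 γ, conv0 γ']
      rw [ev0, ev0', evp, evp', evq, evq', ev0, ev0', evp, evp', evq, evq']
      by_cases hip : i = p <;> by_cases hiq : i = q <;>
        by_cases hjp : j = p <;> by_cases hjq : j = q <;>
        first
        | exact absurd (hip.symm.trans hiq) hne
        | exact absurd (hjp.symm.trans hjq) hne
        | (have hci : c i = 0 := hc i hip hiq
           simp [hip, hiq, hjp, hjq, hci, hne, hne.symm])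
        | (have hcj : c j = 0 := hc j hjp hjq
           simp [hip, hiq, hjp, hjq, hcj, hne, hne.symm])
        | (simp [hip, hiq, hjp, hjq, hne, hne.symm]
           nlinarith [hf, hαa, hδa])
  rw [Finset.sum_sub_distrib] at key
  rw [phi_apply, phi_apply]
  linarith [key]

/-- support graph of a matrix -/
def suppGraph {m : ℕ} (S : Matrix (Fin m) (Fin m) ℝ) : SimpleGraph (Fin m) where
  Adj i j := i ≠ j ∧ (S i j ≠ 0 ∨ S j i ≠ 0)
  symm := ⟨fun i j ⟨h1, h2⟩ => ⟨h1.symm, h2.symm⟩⟩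
  loopless := ⟨fun i h => h.1 rfl⟩

section MainLemmas

variable {m : ℕ} {G : SimpleGraph (Fin m)} {Δ : Finset (Finset (Fin m))}

section DeltaFacts
variable (hΔ : ∀ F : Finset (Fin m), F ∈ Δ ↔
      (F = ∅ ∨ (∃ i, F = {i}) ∨ ∃ i j, G.Adj i j ∧ F = ({i, j} : Finset (Fin m))))
include hΔ

lemma sing_mem (i : Fin m) : ({i} : Finset (Fin m)) ∈ Δ :=
  (hΔ _).2 (Or.inr (Or.inl ⟨i, rfl⟩))

lemma edge_mem {i j : Fin m} (h : G.Adj i j) : ({i, j} : Finset (Fin m)) ∈ Δ :=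
  (hΔ _).2 (Or.inr (Or.inr ⟨i, j, h, rfl⟩))

lemma adj_of_mem {F : Finset (Fin m)} (hF : F ∈ Δ) {i j : Fin m} (hij : i ≠ j)
    (hi : i ∈ F) (hj : j ∈ F) : G.Adj i j := by
  rcases (hΔ F).1 hF with rfl | ⟨a, rfl⟩ | ⟨a, b, hab, rfl⟩
  · simp at hi
  · simp only [Finset.mem_singleton] at hi hj
    exact absurd (hi.trans hj.symm) hij
  · simp only [Finset.mem_insert, Finset.mem_singleton] at hi hj
    rcases hi with rfl | rfl <;> rcases hj with rfl | rfl
    · exact absurd rfl hij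
    · exact hab
    · exact hab.symm
    · exact absurd rfl hij

lemma pair_unique {F : Finset (Fin m)} (hF : F ∈ Δ) {i j : Fin m} (hij : i ≠ j)
    (hi : i ∈ F) (hj : j ∈ F) : F = {i, j} := by
  rcases (hΔ F).1 hF with rfl | ⟨a, rfl⟩ | ⟨a, b, hab, rfl⟩
  · simp at hi
  · simp only [Finset.mem_singleton] at hi hj
    exact absurd (hi.trans hj.symm) hij
  · simp only [Finset.mem_insert, Finset.mem_singleton] at hi hj
    rcases hi with rfl | rfl <;> rcases hj with rfl | rfl
    · exact absurd rfl hij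
    · rfl
    · rw [Finset.pair_comm]
    · exact absurd rfl hij

/-- any matrix in the image of phi lies in the psd cone -/
lemma image_sub_cone : phiImage Δ ⊆ psdCone G := by
  rintro S ⟨γ, rfl⟩
  constructor
  · apply posSemidef_of
    · exact fun i j => phi_symm Δ γ i j
    · intro x
      rw [phi_quad]
      exact Finset.sum_nonneg fun F _ => sq_nonneg _
  · intro i j hij hadj
    rw [phi_apply]
    apply Finset.sum_eq_zero
    intro F hF
    rw [if_neg]
    rintro ⟨hi, hj⟩
    exact hadj (adj_of_mem hΔ hF hij hi hj)

/-- main induction: if G is acyclic, the cone is contained in the image of phi -/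
lemma cone_sub_image (hG : G.IsAcyclic) : psdCone G ⊆ phiImage Δ := by
  classical
  intro S hS
  obtain ⟨hpsd0, hzero0⟩ := hS
  suffices Hind : ∀ (n : ℕ) (S : Matrix (Fin m) (Fin m) ℝ), S.PosSemidef →
      (∀ i j, i ≠ j → ¬ G.Adj i j → S i j = 0) →
      (Finset.univ.filter (fun pr : Fin m × Fin m => pr.1 ≠ pr.2 ∧ S pr.1 pr.2 ≠ 0)).card = n →
      S ∈ phiImage Δ by
    exact Hind _ S hpsd0 hzero0 rfl
  intro n
  induction n using Nat.strong_induction_on with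
  | _ n ih =>
    intro S hpsd hzero hcard
    by_cases hex : ∀ i j, i ≠ j → S i j = 0
    · -- diagonal case
      refine ⟨fun F i => if F = {i} then Real.sqrt (S i i) else 0, ?_⟩
      ext i j
      rw [phi_apply]
      by_cases hij : i = j
      · subst hij
        rw [Finset.sum_eq_single_of_mem ({i} : Finset (Fin m)) (sing_mem hΔ i)]
        · simp [Real.mul_self_sqrt (psd_diag_nonneg hpsd i)]
        · intro F _ hFne
          simp [hFne]
      · rw [hex i j hij]
        apply Finset.sum_eq_zero
        intro F _
        by_cases hmem : i ∈ F ∧ j ∈ F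
        · have hFi : F ≠ {i} := by
            rintro rfl
            exact hij (Finset.mem_singleton.1 hmem.2).symm
          rw [if_pos hmem, if_neg hFi, zero_mul]
        · rw [if_neg hmem]
    · push_neg at hex
      obtain ⟨i0, j0, hne0, hS0⟩ := hex
      have hHadj : ∀ {i j : Fin m}, (suppGraph S).Adj i j ↔ (i ≠ j ∧ S i j ≠ 0) := by
        intro i j
        constructor
        · rintro ⟨h1, h2 | h2⟩
          · exact ⟨h1, h2⟩
          · exact ⟨h1, by rw [psd_sym hpsd i j]; exact h2⟩
        · rintro ⟨h1, h2⟩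
          exact ⟨h1, Or.inl h2⟩
      have hHG : suppGraph S ≤ G := by
        intro i j hij
        rw [hHadj] at hij
        by_contra hadj
        exact hij.2 (hzero i j hij.1 hadj)
      have hHac : (suppGraph S).IsAcyclic := by
        intro v c hc
        exact hG (c.mapLe hHG) (hc.mapLe hHG)
      obtain ⟨p, q, hpq, hleaf⟩ := exists_leaf hHac (hHadj.2 ⟨hne0, hS0⟩)
      rw [hHadj] at hpq
      obtain ⟨hpq_ne, hSpq⟩ := hpq
      have hleaf' : ∀ r, r ≠ p → S r p ≠ 0 → r = q := by
        intro r h1 h2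
        apply hleaf
        rw [hHadj]
        exact ⟨h1.symm, by rw [psd_sym hpsd p r]; exact h2⟩
      have hGpq : G.Adj p q := by
        by_contra hadj
        exact hSpq (hzero p q hpq_ne hadj)
      have hSpp_nonneg : 0 ≤ S p p := psd_diag_nonneg hpsd p
      have hSpp_pos : 0 < S p p := by
        rcases eq_or_lt_of_le hSpp_nonneg with h0 | h0
        · exact absurd (psd_entry_zero hpsd h0.symm) hSpq
        · exact h0
      have hSpp_ne : S p p ≠ 0 := ne_of_gt hSpp_pos
      set S' : Matrix (Fin m) (Fin m) ℝ :=
        Matrix.of (fun i j => S i j - S i p * S j p / S p p) with hS'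
      have hS'app : ∀ i j, S' i j = S i j - S i p * S j p / S p p := fun i j => rfl
      have hS'sym : ∀ i j, S' i j = S' j i := by
        intro i j
        rw [hS'app, hS'app, psd_sym hpsd i j]
        ring
      have hrowp : ∀ j, S' p j = 0 := by
        intro j
        rw [hS'app, mul_comm, mul_div_assoc, div_self hSpp_ne, mul_one, psd_sym hpsd p j,
          sub_self]
      have hcolp : ∀ i, S' i p = 0 := by
        intro i
        rw [← hS'sym p i]
        exact hrowp i
      have hS'psd : S'.PosSemidef := by
        apply posSemidef_of _ hS'sym
        intro x
        have hkey : ∑ i, ∑ j, x i * S' i j * x j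
            = (∑ i, ∑ j, x i * S i j * x j) - (∑ i, x i * S i p)^2 / S p p := by
          calc ∑ i, ∑ j, x i * S' i j * x j
              = ∑ i, ∑ j, (x i * S i j * x j - (x i * S i p) * (x j * S j p) / S p p) := by
                apply Finset.sum_congr rfl; intro i _
                apply Finset.sum_congr rfl; intro j _
                rw [hS'app]; ring
            _ = (∑ i, ∑ j, x i * S i j * x j)
                - ∑ i, ∑ j, (x i * S i p) * (x j * S j p) / S p p := by
                simp only [Finset.sum_sub_distrib]
            _ = (∑ i, ∑ j, x i * S i j * x j) - (∑ i, x i * S i p)^2 / S p p := by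
                congr 1
                rw [sq, Finset.sum_mul_sum, Finset.sum_div]
                apply Finset.sum_congr rfl; intro i _
                rw [Finset.sum_div]
        rw [hkey, sub_nonneg, div_le_iff₀ hSpp_pos]
        have hc := psd_cauchy hpsd x (ind p)
        rwa [sum_ind_right, quad_ind] at hc
      have hS'zero : ∀ i j, i ≠ j → ¬ G.Adj i j → S' i j = 0 := by
        intro i j hij hadj
        by_cases hip : i = p
        · subst hip; exact hrowp j
        · by_cases hjp : j = p
          · subst hjp; exact hcolp i
          · have hfac : S i p = 0 ∨ S j p = 0 := by
              by_contra hcon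
              push_neg at hcon
              have h1 : i = q := hleaf' i hip hcon.1
              have h2 : j = q := hleaf' j hjp hcon.2
              exact hij (h1.trans h2.symm)
            rw [hS'app, hzero i j hij hadj]
            rcases hfac with h | h <;> rw [h] <;> simp
      -- support strictly decreases
      have hsubset : (Finset.univ.filter
            (fun pr : Fin m × Fin m => pr.1 ≠ pr.2 ∧ S' pr.1 pr.2 ≠ 0))
          ⊆ (Finset.univ.filter
            (fun pr : Fin m × Fin m => pr.1 ≠ pr.2 ∧ S pr.1 pr.2 ≠ 0)) := by
        intro pr hpr
        simp only [Finset.mem_filter, Finset.mem_univ, true_and] at hpr ⊢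
        obtain ⟨hne, hval⟩ := hpr
        refine ⟨hne, ?_⟩
        intro hSij
        apply hval
        by_cases hip : pr.1 = p
        · rw [hip]; exact hrowp pr.2
        · by_cases hjp : pr.2 = p
          · rw [hjp]; exact hcolp pr.1
          · have hfac : S pr.1 p = 0 ∨ S pr.2 p = 0 := by
              by_contra hcon
              push_neg at hcon
              exact hne ((hleaf' pr.1 hip hcon.1).trans (hleaf' pr.2 hjp hcon.2).symm)
            rw [hS'app, hSij]
            rcases hfac with h | h <;> rw [h] <;> simp
      have hmemS : (p, q) ∈ (Finset.univ.filter
          (fun pr : Fin m × Fin m => pr.1 ≠ pr.2 ∧ S pr.1 pr.2 ≠ 0)) := by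
        simp only [Finset.mem_filter, Finset.mem_univ, true_and]
        exact ⟨hpq_ne, hSpq⟩
      have hnotmemS' : (p, q) ∉ (Finset.univ.filter
          (fun pr : Fin m × Fin m => pr.1 ≠ pr.2 ∧ S' pr.1 pr.2 ≠ 0)) := by
        simp only [Finset.mem_filter, Finset.mem_univ, true_and, not_and, not_not]
        intro _
        exact hrowp q
      have hcard_lt : (Finset.univ.filter
          (fun pr : Fin m × Fin m => pr.1 ≠ pr.2 ∧ S' pr.1 pr.2 ≠ 0)).card < n := by
        rw [← hcard]
        exact Finset.card_lt_card
          ((Finset.ssubset_iff_of_subset hsubset).2 ⟨(p, q), hmemS, hnotmemS'⟩)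
      obtain ⟨γ', hγ'⟩ := ih _ hcard_lt S' hS'psd hS'zero rfl
      -- add the rank one on the edge {p, q}
      set c : Fin m → ℝ := fun i => S i p / Real.sqrt (S p p) with hcdef
      have hcsupp : ∀ i, i ≠ p → i ≠ q → c i = 0 := by
        intro i h1 h2
        have : S i p = 0 := by
          by_contra hcon
          exact h2 (hleaf' i h1 hcon)
        rw [hcdef]; simp only []
        rw [this, zero_div]
      have hcc : ∀ i j, c i * c j = S i p * S j p / S p p := by
        intro i j
        rw [hcdef]; simp only []
        rw [div_mul_div_comm, Real.mul_self_sqrt hSpp_nonneg]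
      obtain ⟨γ, hγ⟩ := add_rankone Δ hpq_ne (edge_mem hΔ hGpq) (sing_mem hΔ p)
        (sing_mem hΔ q) γ' c hcsupp
      refine ⟨γ, ?_⟩
      ext i j
      rw [hγ i j, hγ', hS'app, hcc]
      ring

end DeltaFacts
end MainLemmas

/-- for the edge complex `Δ` of a graph `G` (faces: the empty set,
the singletons, and the edges of `G`), the map `φ_Δ` is surjective onto
`S⪰0^m(G)` if and only if `G` is a forest. -/
theorem edge_complex_surjective_iff_forest (m : ℕ) (G : SimpleGraph (Fin m))
    (Δ : Finset (Finset (Fin m)))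
    (hΔ : ∀ F : Finset (Fin m), F ∈ Δ ↔
      (F = ∅ ∨ (∃ i, F = {i}) ∨ ∃ i j, G.Adj i j ∧ F = ({i, j} : Finset (Fin m)))) :
    phiImage Δ = psdCone G ↔ G.IsAcyclic := by
  constructor
  · intro himg
    by_contra hcyc
    unfold SimpleGraph.IsAcyclic at hcyc
    push_neg at hcyc
    obtain ⟨v, w, hw⟩ := hcyc
    classical
    set k := w.length with hk
    have hk3 : 3 ≤ k := hw.three_le_length
    set c : ℕ → Fin m := w.getVert with hcdef
    have hck : c k = c 0 := by
      simp only [hcdef, hk, SimpleGraph.Walk.getVert_zero, SimpleGraph.Walk.getVert_length]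
    have hadj : ∀ t, t < k → G.Adj (c t) (c (t+1)) := fun t ht => w.adj_getVert_succ ht
    have hinj : ∀ i j, 1 ≤ i → i ≤ k → 1 ≤ j → j ≤ k → c i = c j → i = j :=
      fun i j h1 h2 h3 h4 h5 => cycle_getVert_inj hw h1 h2 h3 h4 h5
    have hinj0 : ∀ j, 1 ≤ j → j < k → c j ≠ c 0 :=
      fun j h1 h2 => cycle_getVert_ne_zero hw h1 h2
    set d : ℕ → Fin m → ℝ :=
      fun t i => (if c t = i then 1 else 0) - (if c (t+1) = i then 1 else 0) with hd
    have hdapp : ∀ t i, d t i = (if c t = i then (1:ℝ) else 0) - (if c (t+1) = i then 1 else 0) :=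
      fun t i => rfl
    set S : Matrix (Fin m) (Fin m) ℝ := Matrix.of (fun i j =>
      (k : ℝ) * (∑ t ∈ Finset.range (k-1), d t i * d t j) - d (k-1) i * d (k-1) j) with hS
    have hSapp : ∀ i j, S i j =
        (k : ℝ) * (∑ t ∈ Finset.range (k-1), d t i * d t j) - d (k-1) i * d (k-1) j :=
      fun i j => rfl
    have hdsum : ∀ t (x : Fin m → ℝ), (∑ i, d t i * x i) = x (c t) - x (c (t+1)) := by
      intro t x
      simp only [hdapp, sub_mul, ite_mul, one_mul, zero_mul]
      rw [Finset.sum_sub_distrib]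
      rw [Finset.sum_ite_eq Finset.univ (c t) x, Finset.sum_ite_eq Finset.univ (c (t+1)) x]
      simp
    have hquad : ∀ x : Fin m → ℝ, ∑ i, ∑ j, x i * S i j * x j
        = (k:ℝ) * (∑ t ∈ Finset.range (k-1), (x (c t) - x (c (t+1)))^2)
          - (x (c (k-1)) - x (c k))^2 := by
      intro x
      calc ∑ i, ∑ j, x i * S i j * x j
          = ∑ i, ∑ j, ((k:ℝ) * (x i * (∑ t ∈ Finset.range (k-1), d t i * d t j) * x j)
              - (x i * (∑ t ∈ ({k-1} : Finset ℕ), d t i * d t j) * x j)) := by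
            apply Finset.sum_congr rfl; intro i _
            apply Finset.sum_congr rfl; intro j _
            rw [hSapp, Finset.sum_singleton]; ring
        _ = (k:ℝ) * (∑ i, ∑ j, x i * (∑ t ∈ Finset.range (k-1), d t i * d t j) * x j)
              - (∑ i, ∑ j, x i * (∑ t ∈ ({k-1} : Finset ℕ), d t i * d t j) * x j) := by
            simp only [Finset.sum_sub_distrib, Finset.mul_sum]
        _ = (k:ℝ) * (∑ t ∈ Finset.range (k-1), (∑ i, d t i * x i)^2)
              - (∑ t ∈ ({k-1} : Finset ℕ), (∑ i, d t i * x i)^2) := by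
            rw [sumsq, sumsq]
        _ = (k:ℝ) * (∑ t ∈ Finset.range (k-1), (x (c t) - x (c (t+1)))^2)
              - (x (c (k-1)) - x (c k))^2 := by
            rw [Finset.sum_singleton, hdsum]
            simp only [hdsum]
            rw [show k - 1 + 1 = k from by omega]
    have hpsd : S.PosSemidef := by
      apply posSemidef_of
      · intro i j
        rw [hSapp, hSapp]
        rw [show (∑ t ∈ Finset.range (k-1), d t i * d t j)
            = ∑ t ∈ Finset.range (k-1), d t j * d t i from
          Finset.sum_congr rfl fun t _ => mul_comm _ _]
        ring
      · intro x
        rw [hquad]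
        have hA : (0:ℝ) ≤ ∑ t ∈ Finset.range (k-1), (x (c t) - x (c (t+1)))^2 :=
          Finset.sum_nonneg fun t _ => sq_nonneg _
        have htel : ∑ t ∈ Finset.range (k-1), (x (c t) - x (c (t+1)))
            = x (c 0) - x (c (k-1)) :=
          Finset.sum_range_sub' (fun t => x (c t)) (k-1)
        have hcheb := sq_sum_le_card_mul_sum_sq
          (s := Finset.range (k-1)) (f := fun t => x (c t) - x (c (t+1)))
        rw [htel, Finset.card_range] at hcheb
        have hB : x (c (k-1)) - x (c k) = -(x (c 0) - x (c (k-1))) := by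
          rw [hck]; ring
        rw [hB]
        have hcast : ((k-1 : ℕ) : ℝ) ≤ (k : ℝ) := by
          exact_mod_cast Nat.sub_le k 1
        nlinarith [hcheb, hA, mul_le_mul_of_nonneg_right hcast hA]
    have hzero : ∀ i j, i ≠ j → ¬ G.Adj i j → S i j = 0 := by
      intro i j hij hnadj
      have hdz : ∀ t, t < k → d t i * d t j = 0 := by
        intro t ht
        by_cases h1 : c t = i
        · have hj1 : c t ≠ j := fun h => hij (h1.symm.trans h)
          have hj2 : c (t+1) ≠ j := fun h => hnadj (h1 ▸ h ▸ hadj t ht)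
          rw [hdapp t j, if_neg hj1, if_neg hj2]
          simp
        · by_cases h2 : c (t+1) = i
          · have hj1 : c t ≠ j := fun h => hnadj ((h2 ▸ h ▸ hadj t ht).symm)
            have hj2 : c (t+1) ≠ j := fun h => hij (h2.symm.trans h)
            rw [hdapp t j, if_neg hj1, if_neg hj2]
            simp
          · rw [hdapp t i, if_neg h1, if_neg h2]
            simp
      rw [hSapp, Finset.sum_eq_zero (fun t ht => hdz t (by
        have := Finset.mem_range.1 ht; omega)), hdz (k-1) (by omega)]
      simp
    have hmem : S ∈ phiImage Δ := by
      rw [himg]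
      exact ⟨hpsd, hzero⟩
    obtain ⟨γ, hγ⟩ := hmem
    set z : Fin m → ℝ :=
      fun i => if i ∈ (Finset.range k).image (fun t => c t) then 1 else 0 with hz
    have hzval : ∀ t, t ≤ k → z (c t) = 1 := by
      intro t ht
      rcases lt_or_eq_of_le ht with h | h
      · rw [hz]; simp only []
        rw [if_pos (Finset.mem_image.2 ⟨t, Finset.mem_range.2 h, rfl⟩)]
      · rw [h, hck, hz]; simp only []
        rw [if_pos (Finset.mem_image.2 ⟨0, Finset.mem_range.2 (by omega), rfl⟩)]
    have hQz : ∑ i, ∑ j, z i * S i j * z j = 0 := by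
      rw [hquad]
      rw [Finset.sum_eq_zero (fun t ht => by
        have htk := Finset.mem_range.1 ht
        rw [hzval t (by omega), hzval (t+1) (by omega)]
        ring)]
      rw [hzval (k-1) (by omega), hzval k le_rfl]
      ring
    have hFzero : ∀ F ∈ Δ, (∑ i, if i ∈ F then γ F i * z i else 0) = 0 := by
      have h1 : ∑ F ∈ Δ, (∑ i, if i ∈ F then γ F i * z i else 0)^2 = 0 := by
        rw [← phi_quad Δ γ z]
        simp only [hγ]
        exact hQz
      intro F hF
      have := (Finset.sum_eq_zero_iff_of_nonneg (fun F _ => sq_nonneg _)).1 h1 F hF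
      exact pow_eq_zero_iff (by norm_num) |>.1 this
    -- the two endpoints of the closing edge
    have hqp_adj : G.Adj (c 0) (c (k-1)) := by
      have := hadj (k-1) (by omega)
      rw [show k - 1 + 1 = k from by omega, hck] at this
      exact this.symm
    have hpq_ne : c 0 ≠ c (k-1) := fun h => hinj0 (k-1) (by omega) (by omega) h.symm
    have hF0mem : ({c 0, c (k-1)} : Finset (Fin m)) ∈ Δ := edge_mem hΔ hqp_adj
    have hg0 : γ {c 0, c (k-1)} (c 0) + γ {c 0, c (k-1)} (c (k-1)) = 0 := by
      have := hFzero _ hF0mem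
      rw [Finset.sum_ite_mem, Finset.univ_inter, Finset.sum_pair hpq_ne] at this
      rw [hzval 0 (by omega), hzval (k-1) (by omega)] at this
      simpa using this
    have hSpq_phi : S (c 0) (c (k-1)) =
        γ {c 0, c (k-1)} (c 0) * γ {c 0, c (k-1)} (c (k-1)) := by
      rw [← hγ, phi_apply]
      rw [Finset.sum_eq_single_of_mem _ hF0mem]
      · rw [if_pos ⟨Finset.mem_insert_self _ _,
          Finset.mem_insert_of_mem (Finset.mem_singleton_self _)⟩]
      · intro F hF hFne
        rw [if_neg]
        rintro ⟨hi, hj⟩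
        exact hFne (pair_unique hΔ hF hpq_ne hi hj)
    have hSpq_one : S (c 0) (c (k-1)) = 1 := by
      have hclaim : ∀ t ∈ Finset.range (k-1), d t (c 0) * d t (c (k-1)) = 0 := by
        intro t ht
        have htk := Finset.mem_range.1 ht
        have hp2 : c (t+1) ≠ c 0 := hinj0 (t+1) (by omega) (by omega)
        by_cases h1 : c t = c 0
        · have hq1 : c t ≠ c (k-1) :=
            fun h => hinj0 (k-1) (by omega) (by omega) (h.symm.trans h1)
          have hq2 : c (t+1) ≠ c (k-1) := by
            intro h
            have he := hinj (t+1) (k-1) (by omega) (by omega) (by omega) (by omega) h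
            exact hinj0 t (by omega) (by omega) h1
          rw [hdapp t (c (k-1)), if_neg hq1, if_neg hq2]
          simp
        · rw [hdapp t (c 0), if_neg h1, if_neg hp2]
          simp
      rw [hSapp, Finset.sum_eq_zero hclaim]
      have h1 : d (k-1) (c 0) = -1 := by
        rw [hdapp, if_neg (fun h => hinj0 (k-1) (by omega) (by omega) h),
          show k-1+1 = k from by omega, if_pos hck]
        norm_num
      have h2 : d (k-1) (c (k-1)) = 1 := by
        rw [hdapp, if_pos rfl, show k-1+1 = k from by omega,
          if_neg (fun h => hpq_ne (hck.symm.trans h))]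
        norm_num
      rw [h1, h2]
      norm_num
    rw [hSpq_phi] at hSpq_one
    have : γ {c 0, c (k-1)} (c (k-1)) = - γ {c 0, c (k-1)} (c 0) := by linarith
    rw [this] at hSpq_one
    nlinarith [sq_nonneg (γ {c 0, c (k-1)} (c 0))]
  · intro hac
    exact Set.Subset.antisymm (image_sub_cone hΔ) (cone_sub_image hΔ hac)
end

section
/- Let Δ be a simplicial complex on [m] and A ⊊ [m] a proper subset, and let Δ_A = {F ∈ Δ : F ⊆ A} be the induced subcomplex. If a symmetric matrix Σ lies in the image of φ_Δ, then the principal submatrix Σ_{A,A} lies in the image of φ_{Δ_A}. -/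
open Matrix

variable {V : Type*} [Fintype V] [DecidableEq V]

lemma Q_expand (M : V → V → ℝ) (hsym : ∀ i j, M i j = M j i) (x : V → ℝ) (i : V) (t : ℝ) :
    ∑ j, ∑ k, (x j + if j = i then t else 0) * M j k * (x k + if k = i then t else 0)
      = (∑ j, ∑ k, x j * M j k * x k) + 2 * t * (∑ j, x j * M j i) + t^2 * M i i := by
  have h : ∀ j k : V, (x j + if j = i then t else 0) * M j k * (x k + if k = i then t else 0)
      = x j * M j k * x k + (if j = i then t * M i k * x k else 0)
        + (if k = i then x j * M j i * t else 0)
        + ((if j = i then t else 0) * M j k * (if k = i then t else 0)) := by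
    intro j k; split_ifs with h1 h2 h2 <;> (try subst h1) <;> (try subst h2) <;> ring
  simp only [h, Finset.sum_add_distrib]
  have e1 : ∑ j : V, ∑ k : V, (if j = i then t * M i k * x k else 0)
      = ∑ k : V, t * M i k * x k := by
    rw [Finset.sum_comm]
    simp [Finset.sum_ite_eq']
  have e2 : ∑ j : V, ∑ k : V, (if k = i then x j * M j i * t else 0)
      = ∑ j : V, x j * M j i * t := by
    simp [Finset.sum_ite_eq']
  have e3 : ∑ j : V, ∑ k : V, ((if j = i then t else 0) * M j k * (if k = i then t else 0))
      = t^2 * M i i := by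
    simp only [ite_mul, mul_ite, zero_mul, mul_zero, Finset.sum_ite_eq', Finset.mem_univ, if_true]
    ring
  rw [e1, e2, e3]
  have e4 : ∑ k : V, t * M i k * x k = ∑ k : V, x k * M k i * t := by
    apply Finset.sum_congr rfl; intro k _; rw [hsym i k]; ring
  rw [e4]
  have e5 : ∑ k : V, x k * M k i * t = t * ∑ j : V, x j * M j i := by
    rw [Finset.mul_sum]; apply Finset.sum_congr rfl; intro k _; ring
  rw [e5]; ring

def PSDf (M : V → V → ℝ) : Prop :=
  (∀ i j, M i j = M j i) ∧ ∀ x : V → ℝ, 0 ≤ ∑ j, ∑ k, x j * M j k * x k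

lemma psd_key (M : V → V → ℝ) (hM : PSDf M) (x : V → ℝ) (i : V) (t : ℝ) :
    0 ≤ (∑ j, ∑ k, x j * M j k * x k) + 2 * t * (∑ j, x j * M j i) + t^2 * M i i := by
  rw [← Q_expand M hM.1 x i t]
  exact hM.2 _

lemma psd_diag (M : V → V → ℝ) (hM : PSDf M) (i : V) : 0 ≤ M i i := by
  have := psd_key M hM (fun _ => 0) i 1
  simpa using this

lemma psd_cs (M : V → V → ℝ) (hM : PSDf M) (x : V → ℝ) (i : V) :
    (∑ j, x j * M j i)^2 ≤ M i i * (∑ j, ∑ k, x j * M j k * x k) := by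
  set Q := ∑ j, ∑ k, x j * M j k * x k with hQdef
  set c := ∑ j, x j * M j i with hcdef
  set d := M i i with hddef
  have hQ : 0 ≤ Q := hM.2 x
  have hd : 0 ≤ d := psd_diag M hM i
  have key : ∀ t : ℝ, 0 ≤ Q + 2 * t * c + t^2 * d := fun t => psd_key M hM x i t
  rcases eq_or_lt_of_le hd with hd0 | hd0
  · have hc : c = 0 := by
      by_contra hc
      have h1 := key (-(Q+1)/(2*c))
      rw [← hd0, mul_zero, add_zero] at h1
      have e : 2 * (-(Q+1)/(2*c)) * c = -(Q+1) := by field_simp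
      rw [e] at h1
      linarith
    rw [hc, ← hd0]; simp
  · have h1 := key (-c/d)
    have e : Q + 2 * (-c/d) * c + (-c/d)^2*d = Q - c^2/d := by
      field_simp; ring
    rw [e] at h1
    have h2 : c^2/d ≤ Q := by linarith
    have h3 := (div_le_iff₀ hd0).mp h2
    nlinarith [h3]

lemma psd_dvec (M : V → V → ℝ) (j i : V) :
    (∑ l, (if l = j then (1:ℝ) else 0) * M l i) = M j i := by
  simp [ite_mul, Finset.sum_ite_eq']

lemma psd_dQ (M : V → V → ℝ) (j : V) :
    (∑ l, ∑ k, (if l = j then (1:ℝ) else 0) * M l k * (if k = j then (1:ℝ) else 0)) = M j j := by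
  simp only [ite_mul, mul_ite, zero_mul, mul_zero, one_mul, mul_one,
    Finset.sum_ite_eq', Finset.mem_univ, if_true]

lemma psd_entry_sq_s9 (M : V → V → ℝ) (hM : PSDf M) (j k : V) :
    (M j k)^2 ≤ M k k * M j j := by
  have := psd_cs M hM (fun l => if l = j then 1 else 0) k
  rwa [psd_dvec, psd_dQ] at this

lemma psd_exists_pos_diag (M : V → V → ℝ) (hM : PSDf M) (hne : M ≠ 0) :
    ∃ i, 0 < M i i := by
  by_contra h
  push_neg at h
  apply hne
  funext j k
  have hjj : M j j = 0 := le_antisymm (h j) (psd_diag M hM j)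
  have := psd_entry_sq_s9 M hM j k
  rw [hjj, mul_zero] at this
  have : M j k = 0 := by nlinarith [sq_nonneg (M j k)]
  simpa using this

lemma psd_peel (M : V → V → ℝ) (hM : PSDf M) (i : V) (hi : 0 < M i i) :
    PSDf (fun j k => M j k - M j i * M k i / M i i) ∧
    ∀ j k, (j = i ∨ k = i) → M j k - M j i * M k i / M i i = 0 := by
  have hd := hi.ne'
  constructor
  · constructor
    · intro j k
      simp only
      rw [hM.1 j k]; ring
    · intro x
      have expand : ∑ j, ∑ k, x j * (M j k - M j i * M k i / M i i) * x k
          = (∑ j, ∑ k, x j * M j k * x k) - (∑ j, x j * M j i)^2 / M i i := by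
        have h : ∀ j k : V, x j * (M j k - M j i * M k i / M i i) * x k
            = x j * M j k * x k - (x j * M j i) * (x k * M k i) / M i i := by
          intro j k; field_simp
        simp only [h, Finset.sum_sub_distrib]
        congr 1
        rw [sq, Finset.sum_mul_sum, Finset.sum_div]
        apply Finset.sum_congr rfl; intro j _
        rw [Finset.sum_div]
      rw [expand]
      have hcs := psd_cs M hM x i
      have : (∑ j, x j * M j i)^2 / M i i ≤ ∑ j, ∑ k, x j * M j k * x k := by
        rw [div_le_iff₀ hi]
        nlinarith [hcs]
      linarith
  · intro j k hjk
    rcases hjk with rfl | rfl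
    · rw [hM.1 j k]; field_simp; ring
    · field_simp; ring

lemma psd_add (M N : V → V → ℝ) (hM : PSDf M) (hN : PSDf N) :
    PSDf (fun j k => M j k + N j k) := by
  refine ⟨fun i j => by simp only [hM.1 i j, hN.1 i j], fun x => ?_⟩
  have h : ∀ j k : V, x j * (M j k + N j k) * x k
      = x j * M j k * x k + x j * N j k * x k := fun j k => by ring
  simp only [h, Finset.sum_add_distrib]
  exact add_nonneg (hM.2 x) (hN.2 x)

lemma main_decomp : ∀ (n : ℕ) (S : Finset (Finset V)), S.card = n →
    (∀ G ∈ S, ∀ T ⊆ G, T ∈ S) →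
    ∀ M : Finset V → V → V → ℝ,
    (∀ G ∈ S, PSDf (M G) ∧ ∀ a b, (a ∉ G ∨ b ∉ G) → M G a b = 0) →
    ∃ v : Finset V → V → ℝ, ∀ a b : V,
      (∑ G ∈ S, M G a b) = ∑ G ∈ S, (if a ∈ G ∧ b ∈ G then v G a * v G b else 0) := by
  intro n
  induction n with
  | zero =>
    intro S hcard _ M _
    rw [Finset.card_eq_zero] at hcard
    subst hcard
    exact ⟨0, fun a b => by simp⟩
  | succ n ih =>
    intro S hcard hdc M hM
    have hne : S.Nonempty := by
      rw [← Finset.card_pos, hcard]; omega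
    obtain ⟨G₀, hG₀, hmax⟩ := S.exists_max_image Finset.card hne
    set S' := S.erase G₀ with hS'
    have hcard' : S'.card = n := by
      rw [hS', Finset.card_erase_of_mem hG₀, hcard]; omega
    have hdc' : ∀ G ∈ S', ∀ T ⊆ G, T ∈ S' := by
      intro G hG T hT
      have hGS : G ∈ S := Finset.mem_of_mem_erase hG
      have hTS : T ∈ S := hdc G hGS T hT
      rw [hS', Finset.mem_erase]
      refine ⟨?_, hTS⟩
      intro hTG
      rw [hTG] at hT
      have h1 : G₀ ⊆ G := hT
      have h2 : G.card ≤ G₀.card := hmax G hGS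
      have := Finset.eq_of_subset_of_card_le h1 h2
      exact (Finset.mem_erase.mp hG).1 this.symm
    by_cases hz : ∀ a b, M G₀ a b = 0
    · obtain ⟨v, hv⟩ := ih S' hcard' hdc' M
        (fun G hG => hM G (Finset.mem_of_mem_erase hG))
      refine ⟨fun G => if G = G₀ then 0 else v G, fun a b => ?_⟩
      rw [← Finset.add_sum_erase S _ hG₀, ← Finset.add_sum_erase S _ hG₀, hz a b, ← hS']
      rw [hv a b]
      simp only [if_pos rfl]
      congr 1
      · simp
      · apply Finset.sum_congr rfl
        intro G hG
        rw [if_neg (Finset.mem_erase.mp hG).1]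
    · -- peel a rank-one factor from M G₀
      push_neg at hz
      obtain ⟨a₀, b₀, hab⟩ := hz
      have hMG₀ := hM G₀ hG₀
      have hne0 : M G₀ ≠ 0 := by
        intro h; apply hab; rw [h]; rfl
      obtain ⟨i, hi⟩ := psd_exists_pos_diag (M G₀) hMG₀.1 hne0
      have hiG₀ : i ∈ G₀ := by
        by_contra h
        rw [hMG₀.2 i i (Or.inl h)] at hi
        exact lt_irrefl 0 hi
      set M' : V → V → ℝ := fun j k => M G₀ j k - M G₀ j i * M G₀ k i / M G₀ i i with hM'def
      obtain ⟨hM'psd, hM'zero⟩ := psd_peel (M G₀) hMG₀.1 i hi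
      have hM'supp : ∀ a b, (a ∉ G₀.erase i ∨ b ∉ G₀.erase i) → M' a b = 0 := by
        intro a b h
        rcases h with h | h
        · rw [Finset.mem_erase] at h
          push_neg at h
          by_cases ha : a = i
          · exact hM'zero a b (Or.inl ha)
          · have haG : a ∉ G₀ := h ha
            simp only [hM'def, hMG₀.2 a b (Or.inl haG), hMG₀.2 a i (Or.inl haG)]
            simp
        · rw [Finset.mem_erase] at h
          push_neg at h
          by_cases hb : b = i
          · exact hM'zero a b (Or.inr hb)
          · have hbG : b ∉ G₀ := h hb
            simp only [hM'def, hMG₀.2 a b (Or.inr hbG), hMG₀.2 b i (Or.inl hbG)]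
            simp
      set G₁ := G₀.erase i with hG₁def
      have hG₁S : G₁ ∈ S := hdc G₀ hG₀ G₁ (Finset.erase_subset i G₀)
      have hG₁ne : G₁ ≠ G₀ := fun h => (Finset.erase_eq_self.mp h) hiG₀
      have hG₁S' : G₁ ∈ S' := Finset.mem_erase.mpr ⟨hG₁ne, hG₁S⟩
      set M₁ : Finset V → V → V → ℝ :=
        fun G => if G = G₁ then (fun j k => M G₁ j k + M' j k) else M G with hM₁def
      have hyp₁ : ∀ G ∈ S', PSDf (M₁ G) ∧ ∀ a b, (a ∉ G ∨ b ∉ G) → M₁ G a b = 0 := by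
        intro G hG
        by_cases hGG₁ : G = G₁
        · simp only [hM₁def, if_pos hGG₁]
          have h' := hM G₁ hG₁S
          refine ⟨psd_add _ _ h'.1 hM'psd, fun a b h => ?_⟩
          have h'' : a ∉ G₁ ∨ b ∉ G₁ := by
            rcases h with h | h
            · exact Or.inl (hGG₁ ▸ h)
            · exact Or.inr (hGG₁ ▸ h)
          rw [h'.2 a b h'', hM'supp a b h'', add_zero]
        · simp only [hM₁def, if_neg hGG₁]
          exact hM G (Finset.mem_of_mem_erase hG)
      obtain ⟨v, hv⟩ := ih S' hcard' hdc' M₁ hyp₁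
      set v₀ : V → ℝ := fun j => M G₀ j i / Real.sqrt (M G₀ i i) with hv₀def
      refine ⟨fun G => if G = G₀ then v₀ else v G, fun a b => ?_⟩
      have hsqrt : v₀ a * v₀ b = M G₀ a i * M G₀ b i / M G₀ i i := by
        rw [hv₀def]
        simp only
        rw [div_mul_div_comm, Real.mul_self_sqrt hi.le]
      have claim1 : M G₀ a b
          = (if a ∈ G₀ ∧ b ∈ G₀ then v₀ a * v₀ b else 0) + M' a b := by
        split_ifs with h
        · rw [hsqrt, hM'def]; ring
        · rw [not_and_or] at h
          rcases h with h | h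
          · rw [hMG₀.2 a b (Or.inl h), hM'supp a b (Or.inl (fun hc => h (Finset.mem_of_mem_erase hc)))]
            ring
          · rw [hMG₀.2 a b (Or.inr h), hM'supp a b (Or.inr (fun hc => h (Finset.mem_of_mem_erase hc)))]
            ring
      have claim2 : ∑ G ∈ S', M₁ G a b = M' a b + ∑ G ∈ S', M G a b := by
        rw [← Finset.add_sum_erase S' (fun G => M₁ G a b) hG₁S',
            ← Finset.add_sum_erase S' (fun G => M G a b) hG₁S']
        have e1 : M₁ G₁ a b = M G₁ a b + M' a b := by
          simp only [hM₁def, if_pos rfl]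
        have e2 : ∑ G ∈ S'.erase G₁, M₁ G a b = ∑ G ∈ S'.erase G₁, M G a b := by
          apply Finset.sum_congr rfl
          intro G hG
          simp only [hM₁def, if_neg (Finset.mem_erase.mp hG).1]
        rw [e1, e2]; ring
      rw [← Finset.add_sum_erase S (fun G => M G a b) hG₀,
          ← Finset.add_sum_erase S
            (fun G => if a ∈ G ∧ b ∈ G then
              (if G = G₀ then v₀ else v G) a * (if G = G₀ then v₀ else v G) b else 0) hG₀]
      have e4 : (if G₀ = G₀ then v₀ else v G₀) = v₀ := if_pos rfl
      rw [e4]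
      have e3 : ∑ G ∈ S.erase G₀,
          (if a ∈ G ∧ b ∈ G then
            (if G = G₀ then v₀ else v G) a * (if G = G₀ then v₀ else v G) b else 0)
          = ∑ G ∈ S.erase G₀, (if a ∈ G ∧ b ∈ G then v G a * v G b else 0) := by
        apply Finset.sum_congr rfl
        intro G hG
        rw [if_neg (Finset.mem_erase.mp hG).1]
      rw [e3, ← hS', ← hv a b, claim2, claim1]
      ring

/-- if `Σ` is in the image of `φ_Δ` and `A ⊊ [m]`, then the
principal submatrix `Σ_{A,A}` is in the image of `φ_{Δ_A}`, where
`Δ_A = {F ∈ Δ : F ⊆ A}` is the induced subcomplex, regarded as a simplicial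
complex on `A`. -/
theorem submatrix_mem_image_induced_subcomplex (m : ℕ)
    (Δ : Finset (Finset (Fin m))) (hΔ : IsSimplicialComplex Δ)
    (A : Finset (Fin m)) (hA : A ≠ Finset.univ)
    (S : Matrix (Fin m) (Fin m) ℝ) (hS : S ∈ phiImage Δ) :
    S.submatrix (fun a : ↥A => (a : Fin m)) (fun a : ↥A => (a : Fin m)) ∈
      phiImage ((Δ.filter fun F => F ⊆ A).image (Finset.subtype (· ∈ A))) := by
  obtain ⟨γ, hγ⟩ := hS
  classical
  set SS := (Δ.filter fun F => F ⊆ A).image (Finset.subtype (· ∈ A)) with hSS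
  set g : Finset (Fin m) → Finset ↥A := fun F => (F ∩ A).subtype (· ∈ A) with hg
  -- downward closedness of SS
  have hdc : ∀ G ∈ SS, ∀ T ⊆ G, T ∈ SS := by
    intro G hG T hT
    rw [hSS, Finset.mem_image] at hG ⊢
    obtain ⟨F, hF, rfl⟩ := hG
    rw [Finset.mem_filter] at hF
    refine ⟨T.map (Function.Embedding.subtype _), ?_, ?_⟩
    · rw [Finset.mem_filter]
      constructor
      · apply hΔ.1 F hF.1
        intro x hx
        rw [Finset.mem_map] at hx
        obtain ⟨a, ha, rfl⟩ := hx
        have := hT ha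
        rw [Finset.mem_subtype] at this
        exact this
      · intro x hx
        rw [Finset.mem_map] at hx
        obtain ⟨a, _, rfl⟩ := hx
        exact a.2
    · ext a
      simp [Finset.mem_subtype, Finset.mem_map]
  set M : Finset ↥A → ↥A → ↥A → ℝ := fun G a b =>
    ∑ F ∈ Δ, if g F = G ∧ (↑a : Fin m) ∈ F ∧ (↑b : Fin m) ∈ F
      then γ F ↑a * γ F ↑b else 0 with hMdef
  have hmaps : ∀ F ∈ Δ, g F ∈ SS := by
    intro F hF
    rw [hSS, Finset.mem_image]
    exact ⟨F ∩ A, Finset.mem_filter.mpr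
      ⟨hΔ.1 F hF _ Finset.inter_subset_left, Finset.inter_subset_right⟩, rfl⟩
  have hMsupp : ∀ G, ∀ a b : ↥A, (a ∉ G ∨ b ∉ G) → M G a b = 0 := by
    intro G a b h
    apply Finset.sum_eq_zero
    intro F _
    rw [if_neg]
    rintro ⟨hgF, haF, hbF⟩
    rcases h with h | h
    · exact h (hgF ▸ (Finset.mem_subtype.mpr (Finset.mem_inter.mpr ⟨haF, a.2⟩)))
    · exact h (hgF ▸ (Finset.mem_subtype.mpr (Finset.mem_inter.mpr ⟨hbF, b.2⟩)))
  have hMpsd : ∀ G, PSDf (M G) := by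
    intro G
    constructor
    · intro a b
      apply Finset.sum_congr rfl
      intro F _
      split_ifs with h1 h2 h2
      · ring
      · exact absurd ⟨h1.1, h1.2.2, h1.2.1⟩ h2
      · exact absurd ⟨h2.1, h2.2.2, h2.2.1⟩ h1
      · rfl
    · intro x
      have e : ∀ a b : ↥A, x a * M G a b * x b
          = ∑ F ∈ Δ, ((if g F = G ∧ (↑a : Fin m) ∈ F then x a * γ F ↑a else 0)
            * (if g F = G ∧ (↑b : Fin m) ∈ F then x b * γ F ↑b else 0)) := by
        intro a b
        rw [hMdef]
        simp only
        rw [Finset.mul_sum, Finset.sum_mul]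
        apply Finset.sum_congr rfl
        intro F _
        split_ifs with h1 h2 h3 <;> try tauto
        · ring
        all_goals ring
      simp only [e]
      have e3 : (∑ a : ↥A, ∑ b : ↥A, ∑ F ∈ Δ,
          ((if g F = G ∧ (↑a : Fin m) ∈ F then x a * γ F ↑a else 0)
            * (if g F = G ∧ (↑b : Fin m) ∈ F then x b * γ F ↑b else 0)))
          = ∑ F ∈ Δ, ∑ a : ↥A, ∑ b : ↥A,
          ((if g F = G ∧ (↑a : Fin m) ∈ F then x a * γ F ↑a else 0)
            * (if g F = G ∧ (↑b : Fin m) ∈ F then x b * γ F ↑b else 0)) := by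
        have step : ∀ a : ↥A, (∑ b : ↥A, ∑ F ∈ Δ,
            ((if g F = G ∧ (↑a : Fin m) ∈ F then x a * γ F ↑a else 0)
              * (if g F = G ∧ (↑b : Fin m) ∈ F then x b * γ F ↑b else 0)))
            = ∑ F ∈ Δ, ∑ b : ↥A,
            ((if g F = G ∧ (↑a : Fin m) ∈ F then x a * γ F ↑a else 0)
              * (if g F = G ∧ (↑b : Fin m) ∈ F then x b * γ F ↑b else 0)) :=
          fun a => Finset.sum_comm
        simp only [step]
        rw [Finset.sum_comm]
      rw [e3]
      apply Finset.sum_nonneg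
      intro F _
      rw [← Finset.sum_mul_sum, ← sq]
      exact sq_nonneg _
  obtain ⟨v, hv⟩ := main_decomp SS.card SS rfl hdc M (fun G _ => ⟨hMpsd G, hMsupp G⟩)
  refine ⟨v, ?_⟩
  ext a b
  have key : ∑ G ∈ SS, M G a b = phi Δ γ ↑a ↑b := by
    have e1 : ∀ G, M G a b = ∑ F ∈ Δ.filter (fun F => g F = G),
        (if (↑a : Fin m) ∈ F ∧ (↑b : Fin m) ∈ F then γ F ↑a * γ F ↑b else 0) := by
      intro G
      rw [hMdef, Finset.sum_filter]
      apply Finset.sum_congr rfl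
      intro F _
      split_ifs with h1 h2 h3 <;> first | rfl | tauto
    simp only [e1]
    rw [Finset.sum_fiberwise_of_maps_to hmaps]
    rfl
  show (∑ G ∈ SS, if a ∈ G ∧ b ∈ G then v G a * v G b else 0)
      = S.submatrix (fun a : ↥A => (a : Fin m)) (fun a : ↥A => (a : Fin m)) a b
  rw [← hv a b, key, hγ]
  rfl
end

section
/- Let Δ be the edge complex of a graph G with vertex set [m], let Σ be a positive semidefinite m×m matrix, and let i ≠ j with {i,j} an edge of G. Then Σ lies in the image of φ_Δ if and only if Σ^{(ij)} lies in the image of φ_Δ, where Σ^{(ij)} is the symmetric matrix obtained from Σ by negating its (i,j) and (j,i) entries. -/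
open Matrix

/-- `Σ^{(ij)}`: the matrix obtained from `S` by negating the `(i,j)` and
`(j,i)` entries. -/
def negEntry {V : Type*} [DecidableEq V] (S : Matrix V V ℝ) (i j : V) :
    Matrix V V ℝ :=
  Matrix.of fun a b =>
    if (a = i ∧ b = j) ∨ (a = j ∧ b = i) then -S a b else S a b

lemma negEntry_negEntry {V : Type*} [DecidableEq V] (S : Matrix V V ℝ) (i j : V) :
    negEntry (negEntry S i j) i j = S := by
  ext a b
  simp only [negEntry, Matrix.of_apply]
  split_ifs <;> ring

lemma phi_flip (m : ℕ) (G : SimpleGraph (Fin m))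
    (Δ : Finset (Finset (Fin m)))
    (hΔ : ∀ F : Finset (Fin m), F ∈ Δ ↔
      (F = ∅ ∨ (∃ i, F = {i}) ∨ ∃ i j, G.Adj i j ∧ F = ({i, j} : Finset (Fin m))))
    (i j : Fin m) (hij : i ≠ j) (γ : Finset (Fin m) → Fin m → ℝ) :
    phi Δ (fun F a => if a = i ∧ j ∈ F then -γ F a else γ F a)
      = negEntry (phi Δ γ) i j := by
  have hcard : ∀ F ∈ Δ, F.card ≤ 2 := by
    intro F hF
    rcases (hΔ F).1 hF with rfl | ⟨k, rfl⟩ | ⟨k, l, _, rfl⟩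
    · simp
    · simp
    · exact Finset.card_insert_le _ _ |>.trans (by simp)
  have key : ∀ F ∈ Δ, ∀ a : Fin m, a ∈ F → i ∈ F → j ∈ F →
      a ≠ i → a ≠ j → False := by
    intro F hF a ha hi hj hai haj
    have hsub : ({a, i, j} : Finset (Fin m)) ⊆ F := by
      intro x hx; simp at hx; rcases hx with rfl | rfl | rfl <;> assumption
    have h3 : ({a, i, j} : Finset (Fin m)).card = 3 := by
      rw [Finset.card_insert_of_notMem (by simp [hai, haj]),
        Finset.card_insert_of_notMem (by simp [hij])]
      simp
    have := (Finset.card_le_card hsub).trans (hcard F hF)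
    omega
  ext a b
  simp only [phi, negEntry, Matrix.of_apply]
  rw [show (if (a = i ∧ b = j) ∨ (a = j ∧ b = i) then
      -∑ F ∈ Δ, (if a ∈ F ∧ b ∈ F then γ F a * γ F b else 0)
      else ∑ F ∈ Δ, (if a ∈ F ∧ b ∈ F then γ F a * γ F b else 0)) =
      ∑ F ∈ Δ, (if (a = i ∧ b = j) ∨ (a = j ∧ b = i) then
        -(if a ∈ F ∧ b ∈ F then γ F a * γ F b else 0)
        else (if a ∈ F ∧ b ∈ F then γ F a * γ F b else 0)) by
    split_ifs
    · rw [← Finset.sum_neg_distrib]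
    · rfl]
  apply Finset.sum_congr rfl
  intro F hF
  by_cases hab : a ∈ F ∧ b ∈ F
  · obtain ⟨ha, hb⟩ := hab
    have hab' : a ∈ F ∧ b ∈ F := ⟨ha, hb⟩
    by_cases hcond : (a = i ∧ b = j) ∨ (a = j ∧ b = i)
    · simp only [if_pos hab', if_pos hcond]
      rcases hcond with ⟨hai, hbj⟩ | ⟨haj, hbi⟩
      · have h1 : a = i ∧ j ∈ F := ⟨hai, hbj ▸ hb⟩
        have h2 : ¬(b = i ∧ j ∈ F) := fun h => hij (h.1.symm.trans hbj)
        simp only [if_pos h1, if_neg h2]; ring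
      · have h1 : ¬(a = i ∧ j ∈ F) := fun h => hij (h.1.symm.trans haj)
        have h2 : b = i ∧ j ∈ F := ⟨hbi, haj ▸ ha⟩
        simp only [if_neg h1, if_pos h2]; ring
    · simp only [if_pos hab', if_neg hcond]
      by_cases hjF : j ∈ F
      · by_cases hai : a = i
        · have hiF : i ∈ F := hai ▸ ha
          have hba : b = i := by
            by_contra hbi
            exact key F hF b hb hiF hjF hbi (fun h => hcond (Or.inl ⟨hai, h⟩))
          simp only [if_pos (⟨hai, hjF⟩ : a = i ∧ j ∈ F),
            if_pos (⟨hba, hjF⟩ : b = i ∧ j ∈ F)]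
          ring
        · by_cases hbi : b = i
          · have hiF : i ∈ F := hbi ▸ hb
            exact absurd (key F hF a ha hiF hjF hai
              (fun h => hcond (Or.inr ⟨h, hbi⟩))) not_false
          · simp only [if_neg (fun h => hai h.1 : ¬(a = i ∧ j ∈ F)),
              if_neg (fun h => hbi h.1 : ¬(b = i ∧ j ∈ F))]
      · simp only [if_neg (fun h => hjF h.2 : ¬(a = i ∧ j ∈ F)),
          if_neg (fun h => hjF h.2 : ¬(b = i ∧ j ∈ F))]
  · simp only [if_neg hab]
    split_ifs <;> ring

/-- for the edge complex `Δ` of a graph `G`, a positive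
semidefinite matrix `Σ` lies in `im(φ_Δ)` iff `Σ^{(ij)}` does, for any edge
`{i,j}` of `G`. -/
theorem mem_image_iff_negEntry_mem_image (m : ℕ) (G : SimpleGraph (Fin m))
    (Δ : Finset (Finset (Fin m)))
    (hΔ : ∀ F : Finset (Fin m), F ∈ Δ ↔
      (F = ∅ ∨ (∃ i, F = {i}) ∨ ∃ i j, G.Adj i j ∧ F = ({i, j} : Finset (Fin m))))
    (S : Matrix (Fin m) (Fin m) ℝ) (hpsd : S.PosSemidef)
    (i j : Fin m) (hij : i ≠ j) (hadj : G.Adj i j) :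
    S ∈ phiImage Δ ↔ negEntry S i j ∈ phiImage Δ := by
  constructor
  · rintro ⟨γ, rfl⟩
    exact ⟨_, phi_flip m G Δ hΔ i j hij γ⟩
  · rintro ⟨γ, hγ⟩
    refine ⟨fun F a => if a = i ∧ j ∈ F then -γ F a else γ F a, ?_⟩
    rw [phi_flip m G Δ hΔ i j hij γ, hγ, negEntry_negEntry]
end

section
/- Let m ≥ 3 and let Σ = (σ_ij) be a symmetric m×m matrix in S^m(C_m), i.e., σ_ij = 0 whenever i ≠ j and {i,j} is not an edge of the cycle C_m. Then det(Σ) = (−1)^{m+1} · 2 ∏_{i=1}^m σ_{i,i+1} + Σ_{M ∈ M(C_m)} (−1)^{|M|} ∏_{{i,j}∈M} σ_ij² ∏_{i ∈ [m]∖M} σ_ii, where the sum is over all matchings M of C_m, [m]∖M denotes the set of vertices not covered by M, and indices are read modulo m so that σ_{m,m+1} = σ_{1m}. -/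
open Matrix

/-- The matchings of the cycle `C_m`: sets of pairwise disjoint edges, where
the edge indexed by `i : Fin m` is `{i, i+1}` (indices modulo `m`). -/
def cycleMatchings (m : ℕ) [NeZero m] : Finset (Finset (Fin m)) :=
  Finset.univ.filter fun M => ∀ i ∈ M, ∀ j ∈ M, i ≠ j →
    ({i, i + 1} ∩ {j, j + 1} : Finset (Fin m)) = ∅

/-- The matching-expansion term
`∑_{M ∈ M(C_m)} (−1)^{|M|} ∏_{{i,j} ∈ M} σ_ij² ∏_{i ∈ [m]∖M} σ_ii`,
where `[m] ∖ M` is the set of vertices not covered by the matching `M`. -/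
noncomputable def matchingSum {m : ℕ} [NeZero m]
    (S : Matrix (Fin m) (Fin m) ℝ) : ℝ :=
  ∑ M ∈ cycleMatchings m, (-1 : ℝ) ^ M.card *
    (∏ i ∈ M, (S i (i + 1)) ^ 2) *
    ∏ i ∈ (M.biUnion fun i => {i, i + 1})ᶜ, S i i


open Matrix Equiv

section AuxCycleDet

variable {m : ℕ} [NeZero m]

/-- The permutation associated to a set of edge-indices: product of adjacent swaps. -/
noncomputable def cdMperm (M : Finset (Fin m)) : Equiv.Perm (Fin m) :=
  (M.toList.map fun i => Equiv.swap i (i + 1)).prod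

/-- The explicit formula for `cdMperm` on matchings. -/
def cdMatchFun (M : Finset (Fin m)) (x : Fin m) : Fin m :=
  if x ∈ M then x + 1 else if x - 1 ∈ M then x - 1 else x

lemma cd_one_ne (hm : 3 ≤ m) : (1 : Fin m) ≠ 0 := by
  intro h
  have h1 : (1 : Fin m).val = 1 := by rw [Fin.val_one', Nat.mod_eq_of_lt (by omega)]
  rw [h, Fin.val_zero] at h1; omega

lemma cd_two_ne (hm : 3 ≤ m) : (2 : Fin m) ≠ 0 := by
  intro h
  have h1 : (1 : Fin m).val = 1 := by rw [Fin.val_one', Nat.mod_eq_of_lt (by omega)]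
  have := congrArg Fin.val h
  rw [show (2 : Fin m) = 1 + 1 by open Fin.CommRing in norm_num, Fin.val_add, h1, Fin.val_zero] at this
  rw [Nat.mod_eq_of_lt (by omega)] at this
  omega

lemma cd_add_one_ne (hm : 3 ≤ m) (x : Fin m) : x + 1 ≠ x := by
  intro h
  exact cd_one_ne hm ((left_eq_add).mp h.symm)

lemma cd_add_two_ne (hm : 3 ≤ m) (x : Fin m) : x + 2 ≠ x := by
  intro h
  exact cd_two_ne hm ((left_eq_add).mp h.symm)

lemma cd_sub_one_ne (hm : 3 ≤ m) (x : Fin m) : x - 1 ≠ x := by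
  intro h
  have h2 := congrArg (· + 1) h
  simp only [sub_add_cancel] at h2
  exact cd_add_one_ne hm x h2.symm

lemma cd_sub_add_ne (hm : 3 ≤ m) (x : Fin m) : x - 1 ≠ x + 1 := by
  intro h
  have h2 := congrArg (· + 1) h
  simp only [sub_add_cancel, add_assoc] at h2
  rw [show (1 : Fin m) + 1 = 2 by open Fin.CommRing in norm_num] at h2
  exact cd_add_two_ne hm x h2.symm

lemma cd_mem_cycleMatchings {M : Finset (Fin m)} :
    M ∈ cycleMatchings m ↔ ∀ i ∈ M, ∀ j ∈ M, i ≠ j →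
      ({i, i + 1} ∩ {j, j + 1} : Finset (Fin m)) = ∅ := by
  simp [cycleMatchings]

lemma cd_inter_extract {i j : Fin m}
    (h : ({i, i + 1} ∩ {j, j + 1} : Finset (Fin m)) = ∅) :
    i ≠ j ∧ i + 1 ≠ j ∧ i ≠ j + 1 ∧ i + 1 ≠ j + 1 := by
  rw [Finset.eq_empty_iff_forall_notMem] at h
  refine ⟨?_, ?_, ?_, ?_⟩ <;> intro e
  · exact h i (by rw [Finset.mem_inter]; simp [e])
  · exact h j (by rw [Finset.mem_inter]; simp [← e])
  · exact h i (by rw [Finset.mem_inter]; simp [e])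
  · exact h (i + 1) (by rw [Finset.mem_inter]; simp [e])

lemma cd_inter_make {i j : Fin m} (h1 : i ≠ j) (h2 : i + 1 ≠ j) (h3 : i ≠ j + 1) :
    ({i, i + 1} ∩ {j, j + 1} : Finset (Fin m)) = ∅ := by
  have h4 : i + 1 ≠ j + 1 := fun e => h1 (add_right_cancel e)
  rw [Finset.eq_empty_iff_forall_notMem]
  intro x hx
  rw [Finset.mem_inter, Finset.mem_insert, Finset.mem_singleton,
    Finset.mem_insert, Finset.mem_singleton] at hx
  obtain ⟨h5 | h5, h6 | h6⟩ := hx <;> subst h5 <;> simp_all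

lemma cd_next_not_mem (hm : 3 ≤ m) {M : Finset (Fin m)} (hM : M ∈ cycleMatchings m)
    {i : Fin m} (hi : i ∈ M) : i + 1 ∉ M := by
  intro h
  have := (cd_mem_cycleMatchings.1 hM) i hi (i + 1) h (fun e => cd_add_one_ne hm i e.symm)
  rw [Finset.eq_empty_iff_forall_notMem] at this
  exact this (i + 1) (by rw [Finset.mem_inter]; simp)

lemma cd_listProd_apply (hm : 3 ≤ m) :
    ∀ (l : List (Fin m)),
      (l.Pairwise fun i j => i ≠ j ∧ i + 1 ≠ j ∧ i ≠ j + 1) →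
      ∀ x, (l.map fun i => Equiv.swap i (i + 1)).prod x
        = if x ∈ l then x + 1 else if x - 1 ∈ l then x - 1 else x
  | [], _, x => by simp
  | i :: t, hl, x => by
    rw [List.pairwise_cons] at hl
    obtain ⟨hi, ht⟩ := hl
    rw [List.map_cons, List.prod_cons, Equiv.Perm.mul_apply,
      cd_listProd_apply hm t ht x]
    by_cases hxt : x ∈ t
    · have h1 : x ≠ i := fun e => (hi x hxt).1 e.symm
      rw [if_pos hxt]
      rw [Equiv.swap_apply_of_ne_of_ne (fun e => (hi x hxt).2.2 e.symm)
        (fun e => h1 (add_right_cancel e))]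
      rw [if_pos (by simp [hxt])]
    · rw [if_neg hxt]
      by_cases hxs : x - 1 ∈ t
      · have h1 : x - 1 ≠ i := fun e => (hi _ hxs).1 e.symm
        have h2 : x - 1 ≠ i + 1 := fun e => (hi _ hxs).2.1 e.symm
        have hxi : x ≠ i := by
          intro e; subst e
          exact (hi _ hxs).2.2 (by rw [sub_add_cancel])
        rw [if_pos hxs, Equiv.swap_apply_of_ne_of_ne h1 h2,
          if_neg (by simp [hxt, hxi]), if_pos (by simp [hxs])]
      · rw [if_neg hxs]
        by_cases hxi : x = i
        · subst hxi
          rw [Equiv.swap_apply_left, if_pos (by simp)]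
        · by_cases hxi1 : x = i + 1
          · subst hxi1
            rw [Equiv.swap_apply_right, if_neg (by
                simp only [List.mem_cons]
                push_neg
                exact ⟨cd_add_one_ne hm i, hxt⟩),
              if_pos (by simp [add_sub_cancel_right]),
              add_sub_cancel_right]
          · rw [Equiv.swap_apply_of_ne_of_ne hxi hxi1,
              if_neg (by simp [hxt, hxi]),
              if_neg (by
                simp only [List.mem_cons]
                push_neg
                refine ⟨fun e => hxi1 ?_, hxs⟩
                rw [← e, sub_add_cancel])]

lemma cd_toList_pairwise (hm : 3 ≤ m) {M : Finset (Fin m)} (hM : M ∈ cycleMatchings m) :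
    M.toList.Pairwise fun i j => i ≠ j ∧ i + 1 ≠ j ∧ i ≠ j + 1 := by
  refine (M.nodup_toList).imp_of_mem ?_
  intro a b ha hb hab
  rw [Finset.mem_toList] at ha hb
  have := cd_inter_extract ((cd_mem_cycleMatchings.1 hM) a ha b hb hab)
  exact ⟨this.1, this.2.1, this.2.2.1⟩

lemma cd_mperm_apply (hm : 3 ≤ m) {M : Finset (Fin m)} (hM : M ∈ cycleMatchings m)
    (x : Fin m) : cdMperm M x = cdMatchFun M x := by
  rw [cdMperm, cd_listProd_apply hm M.toList (cd_toList_pairwise hm hM) x, cdMatchFun]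
  simp [Finset.mem_toList]

lemma cd_matchFun_invol (hm : 3 ≤ m) {M : Finset (Fin m)} (hM : M ∈ cycleMatchings m)
    (x : Fin m) : cdMatchFun M (cdMatchFun M x) = x := by
  unfold cdMatchFun
  by_cases hx : x ∈ M
  · rw [if_pos hx, if_neg (cd_next_not_mem hm hM hx),
      if_pos (by rw [add_sub_cancel_right]; exact hx), add_sub_cancel_right]
  · rw [if_neg hx]
    by_cases hxs : x - 1 ∈ M
    · rw [if_pos hxs, if_pos hxs, sub_add_cancel]
    · rw [if_neg hxs, if_neg hx, if_neg hxs]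

lemma cd_mperm_invol (hm : 3 ≤ m) {M : Finset (Fin m)} (hM : M ∈ cycleMatchings m)
    (x : Fin m) : cdMperm M (cdMperm M x) = x := by
  rw [cd_mperm_apply hm hM, cd_mperm_apply hm hM, cd_matchFun_invol hm hM]

lemma cd_mem_iff_mperm (hm : 3 ≤ m) {M : Finset (Fin m)} (hM : M ∈ cycleMatchings m)
    (i : Fin m) : i ∈ M ↔ cdMperm M i = i + 1 := by
  rw [cd_mperm_apply hm hM, cdMatchFun]
  constructor
  · intro h; rw [if_pos h]
  · intro h
    by_contra hi
    rw [if_neg hi] at h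
    by_cases hs : i - 1 ∈ M
    · rw [if_pos hs] at h
      exact cd_sub_add_ne hm i h
    · rw [if_neg hs] at h
      exact cd_add_one_ne hm i h.symm

lemma cd_sign_mperm (hm : 3 ≤ m) (M : Finset (Fin m)) :
    Equiv.Perm.sign (cdMperm M) = (-1) ^ M.card := by
  rw [cdMperm, Equiv.Perm.sign_prod_list_swap, List.length_map, Finset.length_toList]
  intro g hg
  rw [List.mem_map] at hg
  obtain ⟨i, _, rfl⟩ := hg
  exact ⟨i, i + 1, fun e => cd_add_one_ne hm i e.symm, rfl⟩

end AuxCycleDet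
section AuxCycleDet2

variable {m : ℕ} [NeZero m]

/-- Admissibility: each index moves by at most one around the cycle. -/
def cdAdm (σ : Equiv.Perm (Fin m)) : Prop :=
  ∀ x : Fin m, σ x = x ∨ σ x = x + 1 ∨ σ x = x - 1

open Fin.CommRing in
lemma cd_runUp (hm : 3 ≤ m) (σ : Equiv.Perm (Fin m)) (hσ : cdAdm σ) (i : Fin m)
    (h1 : σ i = i + 1) (h2 : σ (i + 1) = i + 1 + 1) : ∀ x, σ x = x + 1 := by
  have key : ∀ k : ℕ, σ (i + (k : Fin m)) = i + (k : Fin m) + 1 ∧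
      σ (i + (k : Fin m) + 1) = i + (k : Fin m) + 1 + 1 := by
    intro k
    induction k with
    | zero => simpa using ⟨h1, h2⟩
    | succ k ih =>
      have hc : i + ((k + 1 : ℕ) : Fin m) = i + (k : Fin m) + 1 := by
        push_cast; ring
      rw [hc]
      refine ⟨ih.2, ?_⟩
      set y := i + (k : Fin m) + 1 + 1 with hy
      rcases hσ y with h | h | h
      · exfalso
        have : y = i + (k : Fin m) + 1 := σ.injective (by rw [h, ih.2])
        exact cd_add_one_ne hm _ this
      · exact h
      · exfalso
        have hyy : y - 1 = i + (k : Fin m) + 1 := by rw [hy, add_sub_cancel_right]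
        have : y = i + (k : Fin m) := σ.injective (by rw [h, hyy, ih.1])
        rw [hy, add_assoc, show (1 : Fin m) + 1 = 2 by open Fin.CommRing in norm_num] at this
        exact cd_add_two_ne hm _ this
  intro x
  have := (key (x - i).val).1
  rwa [Fin.cast_val_eq_self, add_comm i, sub_add_cancel] at this

lemma cd_adm_inv {σ : Equiv.Perm (Fin m)} (hσ : cdAdm σ) : cdAdm σ⁻¹ := by
  intro x
  have hx : σ (σ⁻¹ x) = x := σ.apply_symm_apply x
  rcases hσ (σ⁻¹ x) with h | h | h
  · rw [hx] at h; left; exact h.symm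
  · rw [hx] at h; right; right
    rw [eq_sub_iff_add_eq]; exact h.symm
  · rw [hx] at h; right; left
    conv_rhs => rw [h]
    rw [sub_add_cancel]

lemma cd_classify (hm : 3 ≤ m) (σ : Equiv.Perm (Fin m)) (hσ : cdAdm σ) :
    (∀ x, σ x = x + 1) ∨ (∀ x, σ x = x - 1) ∨
      ∃ M ∈ cycleMatchings m, σ = cdMperm M := by
  by_cases hup : ∃ i, σ i = i + 1 ∧ σ (i + 1) = i + 1 + 1
  · obtain ⟨i, h1, h2⟩ := hup
    exact Or.inl (cd_runUp hm σ hσ i h1 h2)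
  push_neg at hup
  by_cases hdn : ∃ i, σ i = i - 1 ∧ σ (i - 1) = i - 1 - 1
  · right; left
    obtain ⟨i, h1, h2⟩ := hdn
    have hinv := cd_adm_inv hσ
    have k1 : σ⁻¹ (i - 1 - 1) = i - 1 - 1 + 1 := by
      rw [sub_add_cancel, Equiv.Perm.inv_eq_iff_eq, h2]
    have k2 : σ⁻¹ (i - 1 - 1 + 1) = i - 1 - 1 + 1 + 1 := by
      rw [sub_add_cancel, sub_add_cancel, Equiv.Perm.inv_eq_iff_eq, h1]
    have hall := cd_runUp hm σ⁻¹ hinv _ k1 k2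
    intro x
    have := hall (σ x)
    rw [show σ⁻¹ (σ x) = x from σ.symm_apply_apply x] at this
    rw [eq_sub_iff_add_eq, ← this]
  push_neg at hdn
  right; right
  set M : Finset (Fin m) := Finset.univ.filter (fun i => σ i = i + 1) with hMdef
  have hmem : ∀ i, i ∈ M ↔ σ i = i + 1 := by
    intro i; rw [hMdef, Finset.mem_filter]; simp
  -- if σ x = x - 1 then x - 1 ∈ M
  have hdown : ∀ x, σ x = x - 1 → σ (x - 1) = x := by
    intro x hx
    rcases hσ (x - 1) with h | h | h
    · exact absurd (σ.injective (by rw [h, hx])) (fun e => cd_sub_one_ne hm x e.symm)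
    · rw [h, sub_add_cancel]
    · exact absurd h (hdn x hx)
  have hMmatch : M ∈ cycleMatchings m := by
    rw [cd_mem_cycleMatchings]
    intro i hi j hj hij
    rw [hmem] at hi hj
    apply cd_inter_make hij
    · intro e
      exact hup i hi (by rw [e, hj])
    · intro e
      exact hup j hj (by rw [← e, hi])
  refine ⟨M, hMmatch, ?_⟩
  apply Equiv.ext
  intro x
  rw [cd_mperm_apply hm hMmatch, cdMatchFun]
  by_cases hx : x ∈ M
  · rw [if_pos hx]; exact (hmem x).1 hx
  · rw [if_neg hx]
    by_cases hxs : x - 1 ∈ M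
    · rw [if_pos hxs]
      have hs : σ (x - 1) = x := by
        have := (hmem _).1 hxs; rwa [sub_add_cancel] at this
      rcases hσ x with h | h | h
      · exact absurd (σ.injective (by rw [h, hs])) (cd_sub_one_ne hm x)
      · exact absurd ((hmem x).2 h) hx
      · exact h
    · rw [if_neg hxs]
      rcases hσ x with h | h | h
      · exact h
      · exact absurd ((hmem x).2 h) hx
      · exact absurd ((hmem _).2 (by rw [sub_add_cancel]; exact hdown x h)) hxs

end AuxCycleDet2
section AuxCycleDet3

variable {m : ℕ} [NeZero m]

lemma cd_mperm_adm (hm : 3 ≤ m) {M : Finset (Fin m)} (hM : M ∈ cycleMatchings m) :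
    cdAdm (cdMperm M) := by
  intro x
  rw [cd_mperm_apply hm hM, cdMatchFun]
  split_ifs with h1 h2
  · right; left; rfl
  · right; right; rfl
  · left; rfl

lemma cd_prod_mperm (hm : 3 ≤ m) {M : Finset (Fin m)} (hM : M ∈ cycleMatchings m)
    (S : Matrix (Fin m) (Fin m) ℝ) (hsym : S.IsSymm) :
    ∏ i, S (cdMperm M i) i =
      (∏ i ∈ M, (S i (i + 1)) ^ 2) *
        ∏ i ∈ (M.biUnion fun i => {i, i + 1})ᶜ, S i i := by
  rw [← Finset.prod_mul_prod_compl (M.biUnion fun i => ({i, i + 1} : Finset (Fin m)))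
      (fun i => S (cdMperm M i) i)]
  congr 1
  · rw [Finset.prod_biUnion (by
      intro a ha b hb hab
      simp only [Function.onFun]
      rw [Finset.disjoint_iff_inter_eq_empty]
      exact (cd_mem_cycleMatchings.1 hM) a (Finset.mem_coe.1 ha) b (Finset.mem_coe.1 hb) hab)]
    apply Finset.prod_congr rfl
    intro i hi
    rw [Finset.prod_pair (fun e => cd_add_one_ne hm i e.symm)]
    have e1 : cdMperm M i = i + 1 := (cd_mem_iff_mperm hm hM i).1 hi
    have e2 : cdMperm M (i + 1) = i := by
      rw [cd_mperm_apply hm hM, cdMatchFun, if_neg (cd_next_not_mem hm hM hi),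
        if_pos (by rw [add_sub_cancel_right]; exact hi), add_sub_cancel_right]
    rw [e1, e2, hsym.apply i (i + 1), sq]
  · apply Finset.prod_congr rfl
    intro x hx
    rw [Finset.mem_compl, Finset.mem_biUnion] at hx
    push_neg at hx
    have hx1 : x ∉ M := fun h => (hx x h) (by simp)
    have hx2 : x - 1 ∉ M := fun h => (hx (x - 1) h) (by
      rw [Finset.mem_insert, Finset.mem_singleton, sub_add_cancel]
      right; rfl)
    rw [cd_mperm_apply hm hM, cdMatchFun, if_neg hx1, if_neg hx2]

lemma cd_mperm_inj (hm : 3 ≤ m) {M N : Finset (Fin m)} (hM : M ∈ cycleMatchings m)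
    (hN : N ∈ cycleMatchings m) (h : cdMperm M = cdMperm N) : M = N := by
  ext i
  rw [cd_mem_iff_mperm hm hM, cd_mem_iff_mperm hm hN, h]

end AuxCycleDet3

/-- the determinant expansion for matrices in `S^m(C_m)`:
`det Σ = (−1)^{m+1} · 2 ∏_i σ_{i,i+1} + ∑_{M ∈ M(C_m)} (−1)^{|M|}
∏_{{i,j} ∈ M} σ_ij² ∏_{i ∈ [m]∖M} σ_ii`. -/
theorem det_eq_cycle_term_add_matchingSum (m : ℕ) [NeZero m] (hm : 3 ≤ m)
    (S : Matrix (Fin m) (Fin m) ℝ) (hsym : S.IsSymm)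
    (hzero : ∀ i j : Fin m, i ≠ j → j ≠ i + 1 → i ≠ j + 1 → S i j = 0) :
    S.det = (-1 : ℝ) ^ (m + 1) * 2 * (∏ i : Fin m, S i (i + 1))
      + matchingSum S := by
  classical
  obtain ⟨n, rfl⟩ : ∃ n, m = n + 1 := ⟨m - 1, by omega⟩
  set R : Equiv.Perm (Fin (n + 1)) := finRotate (n + 1) with hR
  have hRapp : ∀ x : Fin (n + 1), R x = x + 1 := fun x => finRotate_succ_apply x
  have hRinvapp : ∀ x : Fin (n + 1), R⁻¹ x = x - 1 := by
    intro x
    rw [Equiv.Perm.inv_eq_iff_eq, hRapp, sub_add_cancel]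
  have h011 : ((0 : Fin (n + 1)) + 1 + 1) = 2 := by open Fin.CommRing in norm_num
  -- Step 1: restrict the determinant sum to admissible permutations
  have hstep1 : S.det = ∑ σ ∈ Finset.univ.filter cdAdm,
      ((Equiv.Perm.sign σ : ℤ) : ℝ) * ∏ i, S (σ i) i := by
    rw [Matrix.det_apply']
    symm
    apply Finset.sum_filter_of_ne
    intro σ _ hne
    by_contra hadm
    apply hne
    rw [cdAdm] at hadm
    push_neg at hadm
    obtain ⟨x, h1, h2, h3⟩ := hadm
    have hz : S (σ x) x = 0 := by
      apply hzero _ _ h1 ?_ h2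
      intro e
      apply h3
      rw [eq_sub_iff_add_eq, ← e]
    have hp : ∏ i, S (σ i) i = 0 := Finset.prod_eq_zero (Finset.mem_univ x) hz
    rw [hp, mul_zero]
  -- Step 2: identify the set of admissible permutations
  have hset : Finset.univ.filter cdAdm =
      insert R (insert R⁻¹ ((cycleMatchings (n + 1)).image cdMperm)) := by
    ext σ
    simp only [Finset.mem_filter, Finset.mem_univ, true_and, Finset.mem_insert,
      Finset.mem_image]
    constructor
    · intro h
      rcases cd_classify hm σ h with h | h | ⟨M, hM, rfl⟩
      · left; exact Equiv.ext fun x => by rw [h x, hRapp]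
      · right; left; exact Equiv.ext fun x => by rw [h x, hRinvapp]
      · right; right; exact ⟨M, hM, rfl⟩
    · rintro (rfl | rfl | ⟨M, hM, rfl⟩)
      · intro x; right; left; exact hRapp x
      · intro x; right; right; exact hRinvapp x
      · exact cd_mperm_adm hm hM
  have hRnotinv : R ≠ R⁻¹ := by
    intro h
    have h2 : R (R 0) = 0 := by
      nth_rewrite 2 [h]
      exact R.apply_symm_apply 0
    rw [hRapp, hRapp, h011] at h2
    exact cd_two_ne hm h2
  have hRnotim : ∀ M ∈ cycleMatchings (n + 1), cdMperm M ≠ R := by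
    intro M hM h
    have h2 := cd_mperm_invol hm hM 0
    rw [h, hRapp, hRapp, h011] at h2
    exact cd_two_ne hm h2
  have hRinvnotim : ∀ M ∈ cycleMatchings (n + 1), cdMperm M ≠ R⁻¹ := by
    intro M hM h
    have h2 := cd_mperm_invol hm hM 0
    rw [h, hRinvapp, hRinvapp] at h2
    have h3 := congrArg (fun y => y + 1 + 1) h2
    simp only [sub_add_cancel] at h3
    rw [h011] at h3
    exact cd_two_ne hm h3.symm
  rw [hstep1, hset,
    Finset.sum_insert (by
      simp only [Finset.mem_insert, Finset.mem_image]
      push_neg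
      exact ⟨hRnotinv, fun M hM => hRnotim M hM⟩),
    Finset.sum_insert (by
      simp only [Finset.mem_image]
      push_neg
      exact fun M hM => hRinvnotim M hM),
    Finset.sum_image (fun M hM N hN h => cd_mperm_inj hm hM hN h)]
  have hsignR : ((Equiv.Perm.sign R : ℤ) : ℝ) = (-1) ^ (n + 1 + 1) := by
    rw [hR, sign_finRotate]
    push_cast
    rw [pow_succ, pow_succ]
    ring
  have hprodR : ∏ i, S (R i) i = ∏ i, S i (i + 1) :=
    Finset.prod_congr rfl fun i _ => by rw [hRapp, hsym.apply]
  have hprodRinv : ∏ i, S (R⁻¹ i) i = ∏ i, S i (i + 1) := by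
    have h1 : ∏ i, S (R⁻¹ i) i = ∏ i, S (i - 1) i :=
      Finset.prod_congr rfl fun i _ => by rw [hRinvapp]
    rw [h1, ← Equiv.prod_comp (Equiv.addRight (1 : Fin (n + 1)))
      (fun i => S (i - 1) i)]
    exact Finset.prod_congr rfl fun i _ => by
      simp [Equiv.coe_addRight, add_sub_cancel_right]
  have hmsum : ∑ M ∈ cycleMatchings (n + 1),
      ((Equiv.Perm.sign (cdMperm M) : ℤ) : ℝ) * ∏ i, S (cdMperm M i) i
      = matchingSum S := by
    rw [matchingSum]
    apply Finset.sum_congr rfl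
    intro M hM
    rw [cd_prod_mperm hm hM S hsym, cd_sign_mperm hm M]
    push_cast
    ring
  rw [hprodR, Equiv.Perm.sign_inv, hprodRinv, hmsum, hsignR]
  ring
end

section
/- For m ≥ 3 and ρ ∈ ℝ, let Σ(ρ) be the symmetric m×m matrix with diagonal entries 1, entries 1/2 in positions (i,i+1) and (i+1,i) for i = 1,…,m−1, entries ρ/2 in positions (1,m) and (m,1), and all other entries 0. Then det Σ(ρ) = 2^{−m} [m+1 − (m−1)ρ](1+ρ) if m is odd, and det Σ(ρ) = 2^{−m} [m+1 + (m−1)ρ](1−ρ) if m is even. -/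
open Matrix

/-- The matrix `Σ(ρ)`: diagonal entries `1`, entries `1/2` in positions
`(i, i+1)` and `(i+1, i)` for `i = 1, …, m−1`, entries `ρ/2` in positions
`(1, m)` and `(m, 1)`, and zeros elsewhere (here written with indices
`0, …, m−1`). -/
noncomputable def cycMat (m : ℕ) (ρ : ℝ) : Matrix (Fin m) (Fin m) ℝ :=
  Matrix.of fun i j =>
    if i = j then 1
    else if i.val + 1 = j.val ∨ j.val + 1 = i.val then 1 / 2
    else if (i.val = 0 ∧ j.val = m - 1) ∨ (j.val = 0 ∧ i.val = m - 1) then ρ / 2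
    else 0

private def triMat (k : ℕ) : Matrix (Fin k) (Fin k) ℝ :=
  Matrix.of fun i j =>
    if i.val = j.val then 2
    else if i.val + 1 = j.val ∨ j.val + 1 = i.val then 1 else 0

private lemma triMat_apply {k : ℕ} (i j : Fin k) :
    triMat k i j = if i.val = j.val then 2
      else if i.val + 1 = j.val ∨ j.val + 1 = i.val then 1 else 0 := rfl

private lemma triMat_sub (k : ℕ) :
    (triMat (k+1)).submatrix Fin.succ Fin.succ = triMat k := by
  ext i j
  simp only [submatrix_apply, triMat_apply, Fin.val_succ]
  split_ifs <;> first | rfl | omega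

private lemma val_succAbove {k : ℕ} (q : Fin (k+1)) (i : Fin k) :
    (q.succAbove i).val = if i.val < q.val then i.val else i.val + 1 := by
  rcases lt_or_ge (i.val) (q.val) with h | h
  · rw [Fin.succAbove_of_castSucc_lt q i (by simpa [Fin.lt_def] using h), if_pos h]
    rfl
  · rw [Fin.succAbove_of_le_castSucc q i (by simpa [Fin.le_def] using h), if_neg (by omega)]
    rfl

private lemma det_minor1 (p : ℕ) :
    ((triMat (p+1+1)).submatrix (Fin.succ 0).succAbove Fin.succ).det = (triMat p).det := by
  rw [Matrix.det_succ_row_zero, Fin.sum_univ_succ]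
  have hz : ∀ j : Fin p,
      (triMat (p+1+1)).submatrix (Fin.succ 0).succAbove Fin.succ 0 j.succ = 0 := by
    intro j
    simp only [submatrix_apply, triMat_apply, val_succAbove, Fin.val_succ, Fin.val_zero]
    norm_num
  simp only [hz, mul_zero, zero_mul, Finset.sum_const_zero, add_zero]
  have e : (triMat (p+1+1)).submatrix (Fin.succ 0).succAbove Fin.succ 0 0 = 1 := by
    simp only [submatrix_apply, triMat_apply, val_succAbove, Fin.val_succ, Fin.val_zero]
    norm_num
  rw [e]
  have e2 : ((triMat (p+1+1)).submatrix (Fin.succ 0).succAbove Fin.succ).submatrix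
      Fin.succ (Fin.succAbove 0) = triMat p := by
    ext i j
    simp only [submatrix_apply, triMat_apply, val_succAbove, Fin.val_succ, Fin.val_zero,
      Fin.succAbove_zero]
    simp only [show ∀ x : ℕ, ¬ (x + 1 < 0 + 1) from fun x => by omega, if_false]
    split_ifs <;> first | rfl | omega
  rw [e2]
  norm_num

private lemma det_triMat : ∀ k : ℕ, (triMat k).det = (k : ℝ) + 1 := by
  have key : ∀ k : ℕ, (triMat k).det = (k:ℝ)+1 ∧ (triMat (k+1)).det = ((k:ℝ)+1)+1 := by
    intro k
    induction k with
    | zero =>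
      refine ⟨by simp, ?_⟩
      rw [show (triMat 1).det = triMat 1 0 0 from Matrix.det_fin_one _]
      norm_num [triMat_apply]
    | succ p ih =>
      refine ⟨by push_cast; linarith [ih.2], ?_⟩
      rw [Matrix.det_succ_column_zero, Fin.sum_univ_succ, Fin.sum_univ_succ]
      have hz : ∀ i : Fin p, triMat (p+1+1) i.succ.succ 0 = 0 := by
        intro i
        rw [triMat_apply]
        rw [if_neg (by simp [Fin.val_succ]), if_neg (by simp [Fin.val_succ])]
      simp only [hz, mul_zero, zero_mul, Finset.sum_const_zero, add_zero]
      have e0 : triMat (p+1+1) 0 0 = 2 := rfl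
      have e1 : triMat (p+1+1) (Fin.succ 0) 0 = 1 := rfl
      rw [e0, e1]
      rw [show ((triMat (p+1+1)).submatrix (Fin.succAbove 0) Fin.succ) = triMat (p+1) by
        rw [Fin.succAbove_zero]; exact triMat_sub (p+1)]
      rw [det_minor1 p, ih.1, ih.2]
      push_cast
      simp [Fin.val_succ]
      ring
  intro k; exact (key k).1

private lemma detE1 (n : ℕ) :
    (Matrix.updateRow (triMat (n+3)) 0 (Pi.single (Fin.last (n+2)) 1)).det = (-1 : ℝ)^n := by
  rw [Matrix.det_succ_row_zero, Finset.sum_eq_single (Fin.last (n+2))]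
  · rw [show (Matrix.updateRow (triMat (n+3)) 0 (Pi.single (Fin.last (n+2)) (1:ℝ))) 0
        (Fin.last (n+2)) = 1 by simp]
    have ht : ((Matrix.updateRow (triMat (n+3)) 0 (Pi.single (Fin.last (n+2)) (1:ℝ))).submatrix
        Fin.succ (Fin.last (n+2)).succAbove).BlockTriangular id := by
      intro i j hij
      have hij' : (j : ℕ) < (i : ℕ) := hij
      simp only [Matrix.submatrix_apply]
      rw [Matrix.updateRow_ne (Fin.succ_ne_zero i), triMat_apply]
      simp only [val_succAbove, Fin.val_succ, Fin.val_last]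
      have := j.2
      split_ifs <;> first | rfl | omega
    rw [Matrix.det_of_upperTriangular ht]
    have hd : ∀ i : Fin (n+2), ((Matrix.updateRow (triMat (n+3)) 0
        (Pi.single (Fin.last (n+2)) (1:ℝ))).submatrix Fin.succ (Fin.last (n+2)).succAbove) i i
        = 1 := by
      intro i
      simp only [Matrix.submatrix_apply]
      rw [Matrix.updateRow_ne (Fin.succ_ne_zero i), triMat_apply]
      simp only [val_succAbove, Fin.val_succ, Fin.val_last]
      have := i.2
      split_ifs <;> first | rfl | omega
    rw [Finset.prod_congr rfl (fun i _ => hd i), Finset.prod_const_one, Fin.val_last]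
    norm_num [pow_add]
  · intro b _ hb
    rw [show (Matrix.updateRow (triMat (n+3)) 0 (Pi.single (Fin.last (n+2)) (1:ℝ))) 0 b = 0 by
      rw [Matrix.updateRow_self]; exact Pi.single_eq_of_ne hb 1]
    ring
  · intro h; exact absurd (Finset.mem_univ _) h

private lemma detE2 (n : ℕ) :
    (Matrix.updateRow (triMat (n+3)) (Fin.last (n+2)) (Pi.single 0 1)).det = (-1 : ℝ)^n := by
  rw [Matrix.det_succ_row _ (Fin.last (n+2)), Finset.sum_eq_single 0]
  · rw [show (Matrix.updateRow (triMat (n+3)) (Fin.last (n+2)) (Pi.single 0 (1:ℝ)))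
        (Fin.last (n+2)) 0 = 1 by simp]
    have ht : ((Matrix.updateRow (triMat (n+3)) (Fin.last (n+2)) (Pi.single 0 (1:ℝ))).submatrix
        (Fin.last (n+2)).succAbove (0 : Fin (n+3)).succAbove).BlockTriangular
        OrderDual.toDual := by
      intro i j hij
      have hij' : (i : ℕ) < (j : ℕ) := hij
      simp only [Matrix.submatrix_apply, Fin.succAbove_zero, Fin.succAbove_last]
      rw [Matrix.updateRow_ne (Fin.castSucc_lt_last i).ne, triMat_apply]
      simp only [Fin.coe_castSucc, Fin.val_succ]
      split_ifs <;> first | rfl | omega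
    rw [Matrix.det_of_lowerTriangular _ ht]
    have hd : ∀ i : Fin (n+2), ((Matrix.updateRow (triMat (n+3)) (Fin.last (n+2))
        (Pi.single 0 (1:ℝ))).submatrix (Fin.last (n+2)).succAbove
        (0 : Fin (n+3)).succAbove) i i = 1 := by
      intro i
      simp only [Matrix.submatrix_apply, Fin.succAbove_zero, Fin.succAbove_last]
      rw [Matrix.updateRow_ne (Fin.castSucc_lt_last i).ne, triMat_apply]
      simp only [Fin.coe_castSucc, Fin.val_succ]
      simp
    rw [Finset.prod_congr rfl (fun i _ => hd i), Finset.prod_const_one, Fin.val_last,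
      Fin.val_zero]
    norm_num [pow_add]
  · intro b _ hb
    rw [show (Matrix.updateRow (triMat (n+3)) (Fin.last (n+2)) (Pi.single 0 (1:ℝ)))
        (Fin.last (n+2)) b = 0 by rw [Matrix.updateRow_self]; exact Pi.single_eq_of_ne hb 1]
    ring
  · intro h; exact absurd (Finset.mem_univ _) h

private lemma detE3 (n : ℕ) :
    (Matrix.updateRow (Matrix.updateRow (triMat (n+3)) 0 (Pi.single (Fin.last (n+2)) 1))
      (Fin.last (n+2)) (Pi.single 0 1)).det = -((n : ℝ) + 2) := by
  set N := Matrix.updateRow (Matrix.updateRow (triMat (n+3)) 0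
      (Pi.single (Fin.last (n+2)) (1:ℝ))) (Fin.last (n+2)) (Pi.single 0 (1:ℝ)) with hN
  rw [Matrix.det_succ_row _ (Fin.last (n+2)), Finset.sum_eq_single 0]
  · rw [show N (Fin.last (n+2)) 0 = 1 by simp [hN]]
    have inner : (N.submatrix (Fin.last (n+2)).succAbove (0 : Fin (n+3)).succAbove).det
        = (-1 : ℝ)^(n+1) * ((n : ℝ) + 2) := by
      set S := N.submatrix (Fin.last (n+2)).succAbove (0 : Fin (n+3)).succAbove with hS
      rw [Matrix.det_succ_row_zero, Finset.sum_eq_single (Fin.last (n+1))]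
      · have h00 : S 0 (Fin.last (n+1)) = 1 := by
          simp only [hS, hN, Matrix.submatrix_apply, Fin.succAbove_last, Fin.succAbove_zero,
            Fin.castSucc_zero, Fin.succ_last]
          rw [Matrix.updateRow_ne (by simp [Fin.ext_iff] : (0 : Fin (n+3)) ≠ Fin.last (n+2))]
          simp
        rw [h00]
        have hsub : S.submatrix Fin.succ (Fin.last (n+1)).succAbove = triMat (n+1) := by
          ext i j
          simp only [hS, hN, Matrix.submatrix_apply, Fin.succAbove_last, Fin.succAbove_zero]
          rw [Matrix.updateRow_ne (Fin.castSucc_lt_last _).ne,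
            Matrix.updateRow_ne (Fin.ne_of_val_ne (by rw [Fin.coe_castSucc, Fin.val_succ, Fin.val_zero]; omega) : (i.succ.castSucc : Fin (n+3)) ≠ 0)]
          simp only [triMat_apply, Fin.coe_castSucc, Fin.val_succ]
          split_ifs <;> first | rfl | omega
        rw [hsub, det_triMat, Fin.val_last]
        push_cast
        ring
      · intro b _ hb
        have hz : S 0 b = 0 := by
          simp only [hS, hN, Matrix.submatrix_apply, Fin.succAbove_last, Fin.succAbove_zero,
            Fin.castSucc_zero]
          rw [Matrix.updateRow_ne (by simp [Fin.ext_iff] : (0 : Fin (n+3)) ≠ Fin.last (n+2)),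
            Matrix.updateRow_self]
          refine Pi.single_eq_of_ne (fun h => hb ?_) 1
          have := congrArg Fin.val h
          simp only [Fin.val_succ, Fin.val_last] at this
          exact Fin.ext (by simp only [Fin.val_last]; omega)
        rw [hz]; ring
      · intro h; exact absurd (Finset.mem_univ _) h
    rw [inner, Fin.val_last, Fin.val_zero]
    have hs : (-1:ℝ)^(n+2+0) * (-1:ℝ)^(n+1) = -1 := by
      rw [← pow_add]; exact Odd.neg_one_pow ⟨n+1, by ring⟩
    calc (-1:ℝ)^(n+2+0) * 1 * ((-1)^(n+1) * ((n:ℝ)+2))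
        = ((-1:ℝ)^(n+2+0) * (-1:ℝ)^(n+1)) * ((n:ℝ)+2) := by ring
      _ = -(((n:ℝ))+2) := by rw [hs]; ring
  · intro b _ hb
    rw [show N (Fin.last (n+2)) b = 0 by
      simp only [hN]
      rw [Matrix.updateRow_self]; exact Pi.single_eq_of_ne hb 1]
    ring
  · intro h; exact absurd (Finset.mem_univ _) h

/-- `det Σ(ρ) = 2^{−m} [m+1 − (m−1)ρ](1+ρ)` if `m` is odd, and
`det Σ(ρ) = 2^{−m} [m+1 + (m−1)ρ](1−ρ)` if `m` is even. -/
theorem det_cycMat (m : ℕ) (hm : 3 ≤ m) (ρ : ℝ) :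
    (Odd m → (cycMat m ρ).det =
      (1 / 2 ^ m) * (((m : ℝ) + 1) - ((m : ℝ) - 1) * ρ) * (1 + ρ)) ∧
    (Even m → (cycMat m ρ).det =
      (1 / 2 ^ m) * (((m : ℝ) + 1) + ((m : ℝ) - 1) * ρ) * (1 - ρ)) := by
  obtain ⟨n, rfl⟩ : ∃ n, m = n + 3 := ⟨m - 3, by omega⟩
  set A : Matrix (Fin (n+3)) (Fin (n+3)) ℝ := Matrix.of fun i j =>
    if i.val = j.val then 2
    else if i.val + 1 = j.val ∨ j.val + 1 = i.val then 1
    else if (i.val = 0 ∧ j.val = n + 2) ∨ (j.val = 0 ∧ i.val = n + 2) then ρ else 0 with hA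
  have hL0 : (Fin.last (n+2) : Fin (n+3)) ≠ 0 := by simp [Fin.ext_iff]
  have hscale : cycMat (n+3) ρ = (1/2 : ℝ) • A := by
    ext i j
    simp only [cycMat, hA, Matrix.of_apply, Matrix.smul_apply, smul_eq_mul, Fin.ext_iff]
    rw [show (n+3-1) = n+2 from rfl]
    split_ifs <;> ring
  have hAeq : A = Matrix.updateRow (Matrix.updateRow (triMat (n+3)) (Fin.last (n+2))
      (triMat (n+3) (Fin.last (n+2)) + ρ • (Pi.single 0 1 : Fin (n+3) → ℝ))) 0
      (triMat (n+3) 0 + ρ • (Pi.single (Fin.last (n+2)) 1 : Fin (n+3) → ℝ)) := by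
    ext i j
    rcases eq_or_ne i 0 with rfl | hi
    · rw [Matrix.updateRow_self]
      simp only [hA, Matrix.of_apply, triMat_apply, Pi.add_apply, Pi.smul_apply, smul_eq_mul,
        Fin.val_zero]
      rcases eq_or_ne j (Fin.last (n+2)) with rfl | hj
      · rw [Pi.single_eq_same, Fin.val_last]
        simp only [eq_self_iff_true, true_and, and_true, false_and, and_false, or_false,
          false_or, true_or, or_true, ite_true, ite_false, Nat.succ_ne_zero]
        split_ifs <;> first | ring1 | omega | contradiction
      · rw [Pi.single_eq_of_ne hj]
        have hj' : j.val ≠ n+2 := by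
          intro h; exact hj (Fin.ext (by simp [Fin.val_last, h]))
        simp only [eq_self_iff_true, true_and, and_true, false_and, and_false, or_false,
          false_or, true_or, or_true, ite_true, ite_false, Nat.succ_ne_zero]
        split_ifs <;> first | ring1 | omega | contradiction
    · rw [Matrix.updateRow_ne hi]
      have hi0 : i.val ≠ 0 := by
        intro h; exact hi (Fin.ext (by simp [h]))
      rcases eq_or_ne i (Fin.last (n+2)) with rfl | hil
      · rw [Matrix.updateRow_self]
        simp only [hA, Matrix.of_apply, triMat_apply, Pi.add_apply, Pi.smul_apply, smul_eq_mul,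
          Fin.val_last]
        rcases eq_or_ne j 0 with rfl | hj
        · rw [Pi.single_eq_same, Fin.val_zero]
          simp only [eq_self_iff_true, true_and, and_true, false_and, and_false, or_false,
            false_or, true_or, or_true, ite_true, ite_false, Nat.succ_ne_zero]
          split_ifs <;> first | ring1 | omega | contradiction
        · rw [Pi.single_eq_of_ne hj]
          have hj' : j.val ≠ 0 := by
            intro h; exact hj (Fin.ext (by simp [h]))
          simp only [eq_self_iff_true, true_and, and_true, false_and, and_false, or_false,
            false_or, true_or, or_true, ite_true, ite_false, Nat.succ_ne_zero]
          split_ifs <;> first | ring1 | omega | contradiction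
      · rw [Matrix.updateRow_ne hil]
        have hil' : i.val ≠ n+2 := by
          intro h; exact hil (Fin.ext (by simp [Fin.val_last, h]))
        simp only [hA, Matrix.of_apply, triMat_apply]
        split_ifs <;> first | rfl | omega | contradiction
  have hdet : A.det = (((n:ℝ)+3) + 1) + ρ * ((-1:ℝ)^n)
      + ρ * (((-1:ℝ)^n) + ρ * (-((n:ℝ)+2))) := by
    rw [hAeq]
    set M := Matrix.updateRow (triMat (n+3)) (Fin.last (n+2))
      (triMat (n+3) (Fin.last (n+2)) + ρ • (Pi.single 0 1 : Fin (n+3) → ℝ)) with hM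
    rw [show M.updateRow 0 (triMat (n+3) 0 + ρ • (Pi.single (Fin.last (n+2)) 1 : Fin (n+3) → ℝ))
        = M.updateRow 0 (M 0 + ρ • (Pi.single (Fin.last (n+2)) 1 : Fin (n+3) → ℝ)) by
      rw [hM, Matrix.updateRow_ne hL0.symm]]
    rw [Matrix.det_updateRow_add, Matrix.det_updateRow_smul, Matrix.updateRow_eq_self]
    rw [hM, Matrix.det_updateRow_add, Matrix.det_updateRow_smul, Matrix.updateRow_eq_self,
      det_triMat, detE2]
    have hsw : Matrix.updateRow (Matrix.updateRow (triMat (n+3)) (Fin.last (n+2))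
          (triMat (n+3) (Fin.last (n+2)) + ρ • (Pi.single 0 1 : Fin (n+3) → ℝ))) 0
          ((Pi.single (Fin.last (n+2)) 1 : Fin (n+3) → ℝ)) =
        Matrix.updateRow (Matrix.updateRow (triMat (n+3)) 0 ((Pi.single (Fin.last (n+2)) 1 : Fin (n+3) → ℝ)))
          (Fin.last (n+2)) (triMat (n+3) (Fin.last (n+2)) + ρ • (Pi.single 0 1 : Fin (n+3) → ℝ)) := by
      ext a b
      simp only [Matrix.updateRow_apply]
      split_ifs with h1 h2 <;> first | rfl | (exfalso; exact hL0 (h2 ▸ h1 ▸ rfl)) | rfl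
    rw [hsw]
    rw [show (Matrix.updateRow (triMat (n+3)) 0 ((Pi.single (Fin.last (n+2)) 1 : Fin (n+3) → ℝ))).updateRow
          (Fin.last (n+2)) (triMat (n+3) (Fin.last (n+2)) + ρ • (Pi.single 0 1 : Fin (n+3) → ℝ))
        = (Matrix.updateRow (triMat (n+3)) 0 ((Pi.single (Fin.last (n+2)) 1 : Fin (n+3) → ℝ))).updateRow
          (Fin.last (n+2)) ((Matrix.updateRow (triMat (n+3)) 0 ((Pi.single (Fin.last (n+2)) 1 : Fin (n+3) → ℝ)))
            (Fin.last (n+2)) + ρ • (Pi.single 0 1 : Fin (n+3) → ℝ)) by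
      rw [Matrix.updateRow_ne hL0]]
    rw [Matrix.det_updateRow_add, Matrix.det_updateRow_smul, Matrix.updateRow_eq_self,
      detE1, detE3]
    push_cast
    ring
  have hdets : (cycMat (n+3) ρ).det = (1/2:ℝ)^(n+3) * A.det := by
    rw [hscale, Matrix.det_smul]
    simp
  constructor
  · intro hodd
    have hev : Even n := by
      rcases Nat.even_or_odd n with h | h
      · exact h
      · obtain ⟨a, ha⟩ := h; obtain ⟨b, hb⟩ := hodd; omega
    rw [hdets, hdet, hev.neg_one_pow]
    push_cast
    simp only [one_div, inv_pow]
    ring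
  · intro heven
    have hod : Odd n := by
      rcases Nat.even_or_odd n with h | h
      · obtain ⟨a, ha⟩ := h; obtain ⟨b, hb⟩ := heven; omega
      · exact h
    rw [hdets, hdet, hod.neg_one_pow]
    push_cast
    simp only [one_div, inv_pow]
    ring
end

section
/- For every m ≥ 3, there exists a positive semidefinite matrix Σ ∈ S⪰0^m(C_m) that does not lie in the image of φ_{C_m}; hence φ_{C_m} is not surjective onto S⪰0^m(C_m). -/
open Matrix
open Fin.NatCast

/-- The edge complex of the cycle `C_m`, with faces the empty set, the
singletons, and the edges `{i, i+1}` (indices modulo `m`). -/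
def cycleComplex (m : ℕ) [NeZero m] : Finset (Finset (Fin m)) :=
  {∅} ∪ Finset.univ.image (fun i : Fin m => ({i} : Finset (Fin m))) ∪
    Finset.univ.image (fun i : Fin m => ({i, i + 1} : Finset (Fin m)))

/-- The cone `S⪰0^m(C_m)` of positive semidefinite matrices with zeros at the
non-edges of the cycle `C_m`. -/
def cyclePSDCone (m : ℕ) [NeZero m] : Set (Matrix (Fin m) (Fin m) ℝ) :=
  {S | S.PosSemidef ∧
    ∀ i j : Fin m, i ≠ j → j ≠ i + 1 → i ≠ j + 1 → S i j = 0}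

namespace CycleAux

noncomputable def Wf (m j : ℕ) : ℝ := 2 ^ (min j (m + 1 - j))

noncomputable def Pf (m k : ℕ) : ℝ :=
  if k ≤ m - 2 then Real.sqrt (Wf m (k+2) / Wf m (k+1)) else 0

noncomputable def Qf (m k : ℕ) : ℝ :=
  if k ≤ m - 3 then Real.sqrt (Wf m (k+1) / Wf m (k+2))
  else if k = m - 2 then (-1)^(m-3) * Wf m 1 / Real.sqrt (Wf m (m-1) * Wf m m)
  else 0

noncomputable def Rf (m k : ℕ) : ℝ :=
  if k ≤ m - 3 then (-1)^k * Wf m 1 / Real.sqrt (Wf m (k+1) * Wf m (k+2)) else 0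

noncomputable def vf (m k i : ℕ) : ℝ :=
  if i = k then Pf m k
  else if i = k + 1 then Qf m k
  else if i = m - 1 then Rf m k
  else 0

lemma Wf_pos (m j : ℕ) : 0 < Wf m j := by unfold Wf; positivity

lemma Wf_one {m : ℕ} (hm : 3 ≤ m) : Wf m 1 = 2 := by
  unfold Wf; rw [min_eq_left (by omega)]; norm_num

lemma Wf_two {m : ℕ} (hm : 3 ≤ m) : Wf m 2 = 4 := by
  unfold Wf; rw [min_eq_left (by omega)]; norm_num

lemma Wf_pred {m : ℕ} (hm : 3 ≤ m) : Wf m (m - 1) = 4 := by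
  unfold Wf; rw [show m + 1 - (m - 1) = 2 by omega, min_eq_right (by omega)]; norm_num

lemma Wf_last {m : ℕ} (hm : 3 ≤ m) : Wf m m = 2 := by
  unfold Wf; rw [show m + 1 - m = 1 by omega, min_eq_right (by omega)]; norm_num

lemma sqrt_helper1 {x y : ℝ} (hx : 0 < x) (hy : 0 < y) :
    Real.sqrt (x / y) * Real.sqrt (y / x) = 1 := by
  rw [← Real.sqrt_mul (by positivity), show x / y * (y / x) = 1 by field_simp]
  exact Real.sqrt_one

lemma sqrt_helper2 {x y : ℝ} (hx : 0 < x) (hy : 0 < y) :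
    Real.sqrt (x / y) / Real.sqrt (x * y) = 1 / y := by
  have h1 : Real.sqrt (x / y) * Real.sqrt (x * y) = x := by
    rw [← Real.sqrt_mul (by positivity), show x / y * (x * y) = x ^ 2 by field_simp,
      Real.sqrt_sq hx.le]
  have h2 : (0:ℝ) < Real.sqrt (x * y) := Real.sqrt_pos.mpr (by positivity)
  rw [div_eq_div_iff (ne_of_gt h2) (ne_of_gt hy)]
  apply mul_right_cancel₀ (ne_of_gt h2)
  rw [show (1 : ℝ) * Real.sqrt (x*y) * Real.sqrt (x*y) = Real.sqrt (x*y) * Real.sqrt (x*y) by ring,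
    Real.mul_self_sqrt (by positivity)]
  linear_combination y * h1

lemma sq_sign_div_sqrt (n : ℕ) (c u : ℝ) (hu : 0 < u) :
    ((-1:ℝ)^n * c / Real.sqrt u) * ((-1:ℝ)^n * c / Real.sqrt u) = c^2 / u := by
  have hs : Real.sqrt u * Real.sqrt u = u := Real.mul_self_sqrt hu.le
  have hsq : ((-1:ℝ)^n) * ((-1:ℝ)^n) = 1 := by
    rw [← pow_add]
    exact Even.neg_one_pow ⟨n, rfl⟩
  rw [div_mul_div_comm, hs]
  rw [show ((-1:ℝ)^n * c) * ((-1:ℝ)^n * c) = (((-1:ℝ)^n) * ((-1:ℝ)^n)) * c^2 by ring, hsq, one_mul]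

lemma sum_range_single (f : ℕ → ℝ) {m k₀ : ℕ} (hk : k₀ < m)
    (h : ∀ k < m, k ≠ k₀ → f k = 0) : ∑ k ∈ Finset.range m, f k = f k₀ := by
  have := Finset.sum_subset (show {k₀} ⊆ Finset.range m by simp [hk])
    (fun x hx hxn => h x (Finset.mem_range.mp hx) (by simpa using hxn))
  rw [Finset.sum_singleton] at this; exact this.symm

lemma sum_range_pair (f : ℕ → ℝ) {m k₀ k₁ : ℕ} (h0 : k₀ < m) (h1 : k₁ < m) (hne : k₀ ≠ k₁)
    (h : ∀ k < m, k ≠ k₀ → k ≠ k₁ → f k = 0) :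
    ∑ k ∈ Finset.range m, f k = f k₀ + f k₁ := by
  have hsub : ({k₀, k₁} : Finset ℕ) ⊆ Finset.range m := by
    intro x hx; simp only [Finset.mem_insert, Finset.mem_singleton] at hx
    rcases hx with rfl | rfl <;> simp [h0, h1]
  have := Finset.sum_subset hsub (fun x hx hxn => by
    simp only [Finset.mem_insert, Finset.mem_singleton, not_or] at hxn
    exact h x (Finset.mem_range.mp hx) hxn.1 hxn.2)
  rw [Finset.sum_pair hne] at this; exact this.symm


lemma vf_eq_zero {m k i : ℕ} (h1 : i ≠ k) (h2 : i ≠ k + 1) (h3 : i ≠ m - 1) :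
    vf m k i = 0 := by
  unfold vf; rw [if_neg h1, if_neg h2, if_neg h3]

lemma term_zero {m k a b : ℕ}
    (h : (a ≠ k ∧ a ≠ k + 1 ∧ a ≠ m - 1) ∨ (b ≠ k ∧ b ≠ k + 1 ∧ b ≠ m - 1)) :
    vf m k a * vf m k b = 0 := by
  rcases h with ⟨h1, h2, h3⟩ | ⟨h1, h2, h3⟩
  · rw [vf_eq_zero h1 h2 h3, zero_mul]
  · rw [vf_eq_zero h1 h2 h3, mul_zero]

-- EV1 : off-diagonal path edges have entry 1
lemma EV1 {m i : ℕ} (hm : 3 ≤ m) (hi : i ≤ m - 3) :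
    ∑ k ∈ Finset.range m, vf m k i * vf m k (i+1) = 1 := by
  rw [sum_range_single (fun k => vf m k i * vf m k (i+1)) (show i < m by omega)
    (by intro k hk hkne; exact term_zero (by omega))]
  show vf m i i * vf m i (i+1) = 1
  rw [show vf m i i = Pf m i by unfold vf; rw [if_pos rfl],
      show vf m i (i+1) = Qf m i by unfold vf; rw [if_neg (by omega), if_pos rfl]]
  unfold Pf Qf
  rw [if_pos (by omega : i ≤ m - 2), if_pos (by omega : i ≤ m - 3)]
  exact sqrt_helper1 (Wf_pos _ _) (Wf_pos _ _)

-- EV2 : last path edge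
lemma EV2 {m : ℕ} (hm : 3 ≤ m) :
    ∑ k ∈ Finset.range m, vf m k (m-2) * vf m k (m-1)
      = 2 * ((-1)^(m-3) * Wf m 1 / Wf m (m-1)) := by
  rw [sum_range_pair (fun k => vf m k (m-2) * vf m k (m-1)) (show m-3 < m by omega)
    (show m-2 < m by omega) (by omega)
    (by intro k hk h0 h1; exact term_zero (by omega))]
  show vf m (m-3) (m-2) * vf m (m-3) (m-1) + vf m (m-2) (m-2) * vf m (m-2) (m-1) = _
  rw [show vf m (m-3) (m-2) = Qf m (m-3) by
        unfold vf; rw [if_neg (by omega), if_pos (by omega)],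
      show vf m (m-3) (m-1) = Rf m (m-3) by
        unfold vf; rw [if_neg (by omega), if_neg (by omega), if_pos rfl],
      show vf m (m-2) (m-2) = Pf m (m-2) by unfold vf; rw [if_pos rfl],
      show vf m (m-2) (m-1) = Qf m (m-2) by
        unfold vf; rw [if_neg (by omega), if_pos (by omega)]]
  unfold Pf Qf Rf
  rw [if_pos (by omega : m-3 ≤ m-3), if_pos (by omega : m-3 ≤ m-3),
      if_pos (by omega : m-2 ≤ m-2), if_neg (by omega : ¬ (m-2 ≤ m-3)), if_pos rfl]
  rw [show m-3+1 = m-2 by omega, show m-3+2 = m-1 by omega, show m-2+2 = m by omega,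
      show m-2+1 = m-1 by omega]
  have h1 : Real.sqrt (Wf m (m-2) / Wf m (m-1)) / Real.sqrt (Wf m (m-2) * Wf m (m-1))
      = 1 / Wf m (m-1) := sqrt_helper2 (Wf_pos _ _) (Wf_pos _ _)
  have h2 : Real.sqrt (Wf m m / Wf m (m-1)) / Real.sqrt (Wf m m * Wf m (m-1))
      = 1 / Wf m (m-1) := sqrt_helper2 (Wf_pos _ _) (Wf_pos _ _)
  rw [show (Wf m (m-1) * Wf m m) = Wf m m * Wf m (m-1) by ring]
  rw [show Real.sqrt (Wf m (m-2) / Wf m (m-1)) * ((-1:ℝ)^(m-3) * Wf m 1 / Real.sqrt (Wf m (m-2) * Wf m (m-1)))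
        = (-1:ℝ)^(m-3) * Wf m 1 * (Real.sqrt (Wf m (m-2) / Wf m (m-1)) / Real.sqrt (Wf m (m-2) * Wf m (m-1))) by ring,
      show Real.sqrt (Wf m m / Wf m (m-1)) * ((-1:ℝ)^(m-3) * Wf m 1 / Real.sqrt (Wf m m * Wf m (m-1)))
        = (-1:ℝ)^(m-3) * Wf m 1 * (Real.sqrt (Wf m m / Wf m (m-1)) / Real.sqrt (Wf m m * Wf m (m-1))) by ring,
      h1, h2]
  ring

-- EV3 : wrap edge
lemma EV3 {m : ℕ} (hm : 3 ≤ m) :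
    ∑ k ∈ Finset.range m, vf m k (m-1) * vf m k 0 = 1 := by
  rw [sum_range_single (fun k => vf m k (m-1) * vf m k 0) (show 0 < m by omega)
    (by intro k hk hkne; exact term_zero (by omega))]
  show vf m 0 (m-1) * vf m 0 0 = 1
  rw [show vf m 0 (m-1) = Rf m 0 by
        unfold vf; rw [if_neg (by omega), if_neg (by omega), if_pos rfl],
      show vf m 0 0 = Pf m 0 by unfold vf; rw [if_pos rfl]]
  unfold Pf Rf
  rw [if_pos (by omega : (0:ℕ) ≤ m - 3), if_pos (by omega : (0:ℕ) ≤ m - 2)]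
  rw [pow_zero, one_mul]
  rw [show (Wf m 1 * Wf m 2) = Wf m 2 * Wf m 1 by ring]
  have h1 : Real.sqrt (Wf m 2 / Wf m 1) / Real.sqrt (Wf m 2 * Wf m 1)
      = 1 / Wf m 1 := sqrt_helper2 (Wf_pos _ _) (Wf_pos _ _)
  rw [show Wf m 1 / Real.sqrt (Wf m 2 * Wf m 1) * Real.sqrt (Wf m 2 / Wf m 1)
        = Wf m 1 * (Real.sqrt (Wf m 2 / Wf m 1) / Real.sqrt (Wf m 2 * Wf m 1)) by ring, h1]
  rw [mul_one_div, div_self (ne_of_gt (Wf_pos m 1))]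

-- EV4 : diagonal at 0
lemma EV4 {m : ℕ} (hm : 3 ≤ m) :
    ∑ k ∈ Finset.range m, vf m k 0 * vf m k 0 = Wf m 2 / Wf m 1 := by
  rw [sum_range_single (fun k => vf m k 0 * vf m k 0) (show 0 < m by omega)
    (by intro k hk hkne; exact term_zero (by omega))]
  show vf m 0 0 * vf m 0 0 = _
  rw [show vf m 0 0 = Pf m 0 by unfold vf; rw [if_pos rfl]]
  unfold Pf
  rw [if_pos (by omega : (0:ℕ) ≤ m - 2)]
  have h1 := Wf_pos m 2; have h2 := Wf_pos m 1
  exact Real.mul_self_sqrt (by positivity)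

-- EV5 : interior diagonal
lemma EV5 {m i : ℕ} (hm : 3 ≤ m) (hi1 : 1 ≤ i) (hi2 : i ≤ m - 2) :
    ∑ k ∈ Finset.range m, vf m k i * vf m k i
      = Wf m i / Wf m (i+1) + Wf m (i+2) / Wf m (i+1) := by
  rw [sum_range_pair (fun k => vf m k i * vf m k i) (show i-1 < m by omega)
    (show i < m by omega) (by omega)
    (by intro k hk h0 h1; exact term_zero (by omega))]
  show vf m (i-1) i * vf m (i-1) i + vf m i i * vf m i i = _
  rw [show vf m (i-1) i = Qf m (i-1) by
        unfold vf; rw [if_neg (by omega), if_pos (by omega)],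
      show vf m i i = Pf m i by unfold vf; rw [if_pos rfl]]
  unfold Pf Qf
  rw [if_pos (by omega : i - 1 ≤ m - 3), if_pos (by omega : i ≤ m - 2),
      show i-1+1 = i by omega, show i-1+2 = i+1 by omega]
  have p1 := Wf_pos m i; have p2 := Wf_pos m (i+1); have p3 := Wf_pos m (i+2)
  rw [Real.mul_self_sqrt (by positivity), Real.mul_self_sqrt (by positivity)]

-- EV6 : diagonal at m-1
lemma EV6 {m : ℕ} (hm : 3 ≤ m) :
    ∑ k ∈ Finset.range m, vf m k (m-1) * vf m k (m-1)
      = (∑ k ∈ Finset.range (m-2), (Wf m 1)^2 / (Wf m (k+1) * Wf m (k+2)))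
        + (Wf m 1)^2 / (Wf m (m-1) * Wf m m) := by
  obtain ⟨t, rfl⟩ : ∃ t, m = t + 3 := ⟨m - 3, by omega⟩
  rw [show t+3-1 = t+2 by omega, show t+3-2 = t+1 by omega]
  rw [show (Finset.range (t+3)) = Finset.range ((t+2)+1) from rfl, Finset.sum_range_succ,
      show (Finset.range (t+2)) = Finset.range ((t+1)+1) from rfl, Finset.sum_range_succ]
  have e1 : vf (t+3) (t+2) (t+2) = 0 := by
    unfold vf Pf; rw [if_pos rfl, if_neg (by omega)]
  have e2 : vf (t+3) (t+1) (t+2) = Qf (t+3) (t+1) := by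
    unfold vf; rw [if_neg (by omega), if_pos (by omega)]
  rw [e1, e2]
  have e3 : Qf (t+3) (t+1) * Qf (t+3) (t+1) = (Wf (t+3) 1)^2 / (Wf (t+3) (t+2) * Wf (t+3) (t+3)) := by
    unfold Qf
    rw [if_neg (by omega), if_pos (by omega)]
    rw [show (t+3:ℕ)-1 = t+2 by omega, show (t+3:ℕ)-3 = t by omega]
    exact sq_sign_div_sqrt t _ _ (by have := Wf_pos (t+3) (t+2); have := Wf_pos (t+3) (t+3); positivity)
  have e4 : ∀ k ∈ Finset.range (t+1), vf (t+3) k (t+2) * vf (t+3) k (t+2)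
      = (Wf (t+3) 1)^2 / (Wf (t+3) (k+1) * Wf (t+3) (k+2)) := by
    intro k hk
    rw [Finset.mem_range] at hk
    have ek : vf (t+3) k (t+2) = Rf (t+3) k := by
      unfold vf; rw [if_neg (by omega), if_neg (by omega), if_pos (by omega)]
    rw [ek]
    unfold Rf
    rw [if_pos (by omega)]
    exact sq_sign_div_sqrt k _ _ (by have := Wf_pos (t+3) (k+1); have := Wf_pos (t+3) (k+2); positivity)
  rw [Finset.sum_congr rfl e4, e3]
  ring

-- EV7 : pattern zeros
lemma EV7 {m a b : ℕ} (hm : 3 ≤ m) (hab : a + 2 ≤ b) (hbm : b < m)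
    (hno : ¬(a = 0 ∧ b = m - 1)) :
    ∑ k ∈ Finset.range m, vf m k a * vf m k b = 0 := by
  rcases lt_or_ge b (m-1) with hb | hb
  · apply Finset.sum_eq_zero
    intro k hk
    rw [Finset.mem_range] at hk
    exact term_zero (by omega)
  · have hbeq : b = m - 1 := by omega
    have ha1 : 1 ≤ a := by
      by_contra h
      exact hno ⟨by omega, hbeq⟩
    have ha3 : a ≤ m - 3 := by omega
    subst hbeq
    obtain ⟨c, rfl⟩ : ∃ c, a = c + 1 := ⟨a - 1, by omega⟩
    rw [sum_range_pair (fun k => vf m k (c+1) * vf m k (m-1)) (show c < m by omega)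
      (show c+1 < m by omega) (by omega)
      (by intro k hk h0 h1; exact term_zero (by omega))]
    show vf m c (c+1) * vf m c (m-1) + vf m (c+1) (c+1) * vf m (c+1) (m-1) = 0
    rw [show vf m c (c+1) = Qf m c by unfold vf; rw [if_neg (by omega), if_pos rfl],
        show vf m c (m-1) = Rf m c by
          unfold vf; rw [if_neg (by omega), if_neg (by omega), if_pos rfl],
        show vf m (c+1) (c+1) = Pf m (c+1) by unfold vf; rw [if_pos rfl],
        show vf m (c+1) (m-1) = Rf m (c+1) by
          unfold vf; rw [if_neg (by omega), if_neg (by omega), if_pos rfl]]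
    unfold Pf Qf Rf
    rw [if_pos (by omega : c ≤ m-3), if_pos (by omega : c ≤ m-3),
        if_pos (by omega : c+1 ≤ m-2), if_pos (by omega : c+1 ≤ m-3)]
    have h1 : Real.sqrt (Wf m (c+1) / Wf m (c+2)) / Real.sqrt (Wf m (c+1) * Wf m (c+2))
        = 1 / Wf m (c+2) := sqrt_helper2 (Wf_pos _ _) (Wf_pos _ _)
    have h2 : Real.sqrt (Wf m (c+3) / Wf m (c+2)) / Real.sqrt (Wf m (c+3) * Wf m (c+2))
        = 1 / Wf m (c+2) := sqrt_helper2 (Wf_pos _ _) (Wf_pos _ _)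
    rw [show (c+1)+1 = c+2 from rfl, show (c+1)+2 = c+3 from rfl]
    rw [show (Wf m (c+2) * Wf m (c+3)) = Wf m (c+3) * Wf m (c+2) by ring]
    rw [show Real.sqrt (Wf m (c+1) / Wf m (c+2)) * ((-1:ℝ)^c * Wf m 1 / Real.sqrt (Wf m (c+1) * Wf m (c+2)))
          = (-1:ℝ)^c * Wf m 1 * (Real.sqrt (Wf m (c+1) / Wf m (c+2)) / Real.sqrt (Wf m (c+1) * Wf m (c+2))) by ring,
        show Real.sqrt (Wf m (c+3) / Wf m (c+2)) * ((-1:ℝ)^(c+1) * Wf m 1 / Real.sqrt (Wf m (c+3) * Wf m (c+2)))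
          = (-1:ℝ)^(c+1) * Wf m 1 * (Real.sqrt (Wf m (c+3) / Wf m (c+2)) / Real.sqrt (Wf m (c+3) * Wf m (c+2))) by ring,
        h1, h2, pow_succ]
    ring


lemma tentL {m : ℕ} (hm : 3 ≤ m) :
    ∑ k ∈ Finset.range (m-2), 1 / (Wf m (k+1) * Wf m (k+2)) ≤ 7/24 := by
  obtain ⟨t, rfl⟩ : ∃ t, m = t + 3 := ⟨m - 3, by omega⟩
  rw [show (t+3-2 : ℕ) = t+1 by omega]
  rw [Finset.sum_range_succ']
  have hf0 : 1 / (Wf (t+3) (0+1) * Wf (t+3) (0+2)) = 1/8 := by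
    rw [show (0+1 : ℕ) = 1 by omega, show (0+2:ℕ) = 2 by omega,
      Wf_one (by omega), Wf_two (by omega)]
    norm_num
  have hterm : ∀ i ∈ Finset.range t,
      1 / (Wf (t+3) (i+1+1) * Wf (t+3) (i+1+2)) ≤ (1/4:ℝ)^(i+2) + (1/4:ℝ)^(t+1-i) := by
    intro i hi
    rw [Finset.mem_range] at hi
    unfold Wf
    rw [← pow_add]
    have hexp : 2 * min (i+2) (t+1-i)
        ≤ min (i+1+1) (t+3+1-(i+1+1)) + min (i+1+2) (t+3+1-(i+1+2)) := by omega
    have h2M : ((2:ℝ))^(2 * min (i+2) (t+1-i))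
        ≤ 2^(min (i+1+1) (t+3+1-(i+1+1)) + min (i+1+2) (t+3+1-(i+1+2))) :=
      pow_le_pow_right₀ (by norm_num) hexp
    have heq : ((1:ℝ)/4)^(min (i+2) (t+1-i)) = 1 / (2:ℝ)^(2 * min (i+2) (t+1-i)) := by
      rw [div_pow, one_pow, show (4:ℝ) = 2^2 by norm_num, ← pow_mul]
    have hstep : 1 / ((2:ℝ))^(min (i+1+1) (t+3+1-(i+1+1)) + min (i+1+2) (t+3+1-(i+1+2)))
        ≤ ((1:ℝ)/4)^(min (i+2) (t+1-i)) := by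
      rw [heq]
      exact one_div_le_one_div_of_le (by positivity) h2M
    refine hstep.trans ?_
    rcases le_total (i+2) (t+1-i) with h | h
    · rw [min_eq_left h]
      have : (0:ℝ) ≤ (1/4:ℝ)^(t+1-i) := by positivity
      linarith
    · rw [min_eq_right h]
      have : (0:ℝ) ≤ (1/4:ℝ)^(i+2) := by positivity
      linarith
  have hsum1 : ∑ i ∈ Finset.range t, ((1/4:ℝ))^(i+2) ≤ 1/12 := by
    have hrw : ∀ i ∈ Finset.range t, ((1/4:ℝ))^(i+2) = (1/16) * ((1/4:ℝ))^i := by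
      intro i _; rw [pow_add]; norm_num; ring
    rw [Finset.sum_congr rfl hrw, ← Finset.mul_sum]
    have hg : ∑ i ∈ Finset.range t, ((1/4:ℝ))^i ≤ 4/3 := by
      rw [geom_sum_eq (by norm_num)]
      have h1 : (0:ℝ) ≤ (1/4:ℝ)^t := by positivity
      have h2 : ((1/4:ℝ)^t - 1)/((1/4:ℝ) - 1) = (1 - (1/4:ℝ)^t) * (4/3) := by ring
      rw [h2]; nlinarith
    nlinarith
  have hsum2 : ∑ i ∈ Finset.range t, ((1/4:ℝ))^(t+1-i) = ∑ i ∈ Finset.range t, ((1/4:ℝ))^(i+2) := by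
    calc ∑ i ∈ Finset.range t, ((1/4:ℝ))^(t+1-i)
        = ∑ i ∈ Finset.range t, ((1/4:ℝ))^((t-1-i)+2) := by
          apply Finset.sum_congr rfl
          intro i hi
          rw [Finset.mem_range] at hi
          congr 1
          omega
      _ = ∑ i ∈ Finset.range t, ((1/4:ℝ))^(i+2) := Finset.sum_range_reflect (fun j => ((1/4:ℝ))^(j+2)) t
  calc (∑ i ∈ Finset.range t, 1 / (Wf (t+3) (i+1+1) * Wf (t+3) (i+1+2)))
        + 1 / (Wf (t+3) (0+1) * Wf (t+3) (0+2))
      ≤ (∑ i ∈ Finset.range t, (((1/4:ℝ))^(i+2) + ((1/4:ℝ))^(t+1-i))) + 1/8 := by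
        rw [hf0]; exact add_le_add (Finset.sum_le_sum hterm) le_rfl
    _ = (∑ i ∈ Finset.range t, ((1/4:ℝ))^(i+2)) + (∑ i ∈ Finset.range t, ((1/4:ℝ))^(t+1-i)) + 1/8 := by
        rw [Finset.sum_add_distrib]
    _ ≤ 7/24 := by rw [hsum2]; linarith


section FinStuff
variable {m : ℕ} [NeZero m]

lemma val_natCast_lt {i : ℕ} (h : i < m) : ((i : Fin m)).val = i := by
  rw [Fin.val_natCast]; exact Nat.mod_eq_of_lt h

lemma val_add_one (hm : 3 ≤ m) (x : Fin m) : (x + 1).val = (x.val + 1) % m := by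
  rw [Fin.val_add, Fin.val_one']
  rw [Nat.mod_eq_of_lt (show 1 < m by omega)]

lemma ne_add_one (hm : 3 ≤ m) (x : Fin m) : x ≠ x + 1 := by
  intro h
  have hv := congrArg Fin.val h
  rw [val_add_one hm] at hv
  have hx := x.isLt
  rcases Nat.lt_or_ge (x.val + 1) m with h' | h'
  · rw [Nat.mod_eq_of_lt h'] at hv; omega
  · rw [show x.val + 1 = m by omega, Nat.mod_self] at hv; omega

lemma ne_add_two (hm : 3 ≤ m) (x : Fin m) : x ≠ x + 1 + 1 := by
  intro h
  have hv := congrArg Fin.val h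
  rw [val_add_one hm, val_add_one hm] at hv
  have hx := x.isLt
  rcases Nat.lt_or_ge (x.val + 1) m with h' | h'
  · rw [Nat.mod_eq_of_lt h'] at hv
    rcases Nat.lt_or_ge (x.val + 1 + 1) m with h'' | h''
    · rw [Nat.mod_eq_of_lt h''] at hv; omega
    · rw [show x.val + 1 + 1 = m by omega, Nat.mod_self] at hv; omega
  · rw [show x.val + 1 = m by omega, Nat.mod_self] at hv
    rw [show (0 + 1 : ℕ) = 1 by omega, Nat.mod_eq_of_lt (show 1 < m by omega)] at hv
    omega

lemma edge_ne_next (hm : 3 ≤ m) (x : Fin m) :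
    ({x, x+1} : Finset (Fin m)) ≠ {x+1, x+1+1} := by
  intro h
  have hx : x ∈ ({x, x+1} : Finset (Fin m)) := Finset.mem_insert_self _ _
  rw [h, Finset.mem_insert, Finset.mem_singleton] at hx
  rcases hx with h1 | h1
  exacts [ne_add_one hm x h1, ne_add_two hm x h1]

lemma edge_mem (x : Fin m) : ({x, x+1} : Finset (Fin m)) ∈ cycleComplex m := by
  unfold cycleComplex
  rw [Finset.mem_union]
  right
  rw [Finset.mem_image]
  exact ⟨x, Finset.mem_univ x, rfl⟩

lemma face_unique (hm : 3 ≤ m) (F : Finset (Fin m)) (hF : F ∈ cycleComplex m)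
    (x : Fin m) (hx : x ∈ F) (hx1 : x + 1 ∈ F) : F = {x, x+1} := by
  unfold cycleComplex at hF
  rw [Finset.mem_union, Finset.mem_union] at hF
  rcases hF with (hF | hF) | hF
  · rw [Finset.mem_singleton] at hF; subst hF; exact absurd hx (Finset.notMem_empty x)
  · rw [Finset.mem_image] at hF
    obtain ⟨y, -, rfl⟩ := hF
    rw [Finset.mem_singleton] at hx hx1
    exact absurd (hx.trans hx1.symm) (ne_add_one hm x)
  · rw [Finset.mem_image] at hF
    obtain ⟨y, -, rfl⟩ := hF
    rw [Finset.mem_insert, Finset.mem_singleton] at hx hx1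
    rcases hx with rfl | hx
    · rfl
    · rcases hx1 with h1 | h1
      · exact absurd (hx.trans (congrArg (· + 1) h1.symm)) (ne_add_two hm x)
      · have hxy : x = y := add_right_cancel h1
        rw [hxy] at hx
        exact absurd hx (ne_add_one hm y)

lemma phi_edge (hm : 3 ≤ m) (γ : Finset (Fin m) → Fin m → ℝ) (x : Fin m) :
    phi (cycleComplex m) γ x (x+1) = γ {x, x+1} x * γ {x, x+1} (x+1) := by
  show (∑ F ∈ cycleComplex m, if x ∈ F ∧ x + 1 ∈ F then γ F x * γ F (x+1) else 0) = _
  rw [Finset.sum_eq_single_of_mem ({x, x+1} : Finset (Fin m)) (edge_mem x)]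
  · rw [if_pos ⟨Finset.mem_insert_self _ _,
      Finset.mem_insert_of_mem (Finset.mem_singleton_self _)⟩]
  · intro F hF hne
    rw [if_neg]
    rintro ⟨h1, h2⟩
    exact hne (face_unique hm F hF x h1 h2)

lemma phi_diag_pair (hm : 3 ≤ m) (γ : Finset (Fin m) → Fin m → ℝ) (x : Fin m) :
    γ {x+1, x+1+1} (x+1) * γ {x+1, x+1+1} (x+1) + γ {x, x+1} (x+1) * γ {x, x+1} (x+1)
      ≤ phi (cycleComplex m) γ (x+1) (x+1) := by
  show _ ≤ ∑ F ∈ cycleComplex m, if x+1 ∈ F ∧ x+1 ∈ F then γ F (x+1) * γ F (x+1) else 0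
  have hpair : ∑ F ∈ ({({x+1, x+1+1} : Finset (Fin m)), {x, x+1}} : Finset (Finset (Fin m))),
      (if x+1 ∈ F ∧ x+1 ∈ F then γ F (x+1) * γ F (x+1) else 0)
      = γ {x+1, x+1+1} (x+1) * γ {x+1, x+1+1} (x+1) + γ {x, x+1} (x+1) * γ {x, x+1} (x+1) := by
    rw [Finset.sum_pair (edge_ne_next hm x).symm]
    rw [if_pos ⟨Finset.mem_insert_self _ _, Finset.mem_insert_self _ _⟩,
        if_pos ⟨Finset.mem_insert_of_mem (Finset.mem_singleton_self _),
                Finset.mem_insert_of_mem (Finset.mem_singleton_self _)⟩]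
  rw [← hpair]
  apply Finset.sum_le_sum_of_subset_of_nonneg
  · intro F hF
    rw [Finset.mem_insert, Finset.mem_singleton] at hF
    rcases hF with rfl | rfl
    exacts [edge_mem _, edge_mem _]
  · intro F _ _
    split_ifs
    · exact mul_self_nonneg _
    · exact le_rfl

lemma phi_diag_single (hm : 3 ≤ m) (γ : Finset (Fin m) → Fin m → ℝ) (x : Fin m) :
    γ {x, x+1} x * γ {x, x+1} x ≤ phi (cycleComplex m) γ x x := by
  show _ ≤ ∑ F ∈ cycleComplex m, if x ∈ F ∧ x ∈ F then γ F x * γ F x else 0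
  have hsingle : ∑ F ∈ ({({x, x+1} : Finset (Fin m))} : Finset (Finset (Fin m))),
      (if x ∈ F ∧ x ∈ F then γ F x * γ F x else 0)
      = γ {x, x+1} x * γ {x, x+1} x := by
    rw [Finset.sum_singleton,
      if_pos ⟨Finset.mem_insert_self _ _, Finset.mem_insert_self _ _⟩]
  rw [← hsingle]
  apply Finset.sum_le_sum_of_subset_of_nonneg
  · intro F hF; rw [Finset.mem_singleton] at hF; subst hF; exact edge_mem x
  · intro F _ _
    split_ifs
    · exact mul_self_nonneg _
    · exact le_rfl

end FinStuff

end CycleAux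

open CycleAux

/-- for every `m ≥ 3` there is a positive semidefinite matrix in
`S⪰0^m(C_m)` that is not in the image of `φ_{C_m}`; hence `φ_{C_m}` is not
surjective onto `S⪰0^m(C_m)`. -/
theorem exists_psd_not_in_image_cycle (m : ℕ) [NeZero m] (hm : 3 ≤ m) :
    ∃ S ∈ cyclePSDCone m, S ∉ phiImage (cycleComplex m) := by
  classical
  set A : Matrix (Fin m) (Fin m) ℝ := Matrix.of (fun k i : Fin m => vf m k.val i.val) with hA
  have SE : ∀ x y : Fin m, (Aᴴ * A) x y
      = ∑ k ∈ Finset.range m, vf m k x.val * vf m k y.val := by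
    intro x y
    rw [Matrix.mul_apply]
    rw [← Fin.sum_univ_eq_sum_range (fun k => vf m k x.val * vf m k y.val) m]
    apply Finset.sum_congr rfl
    intro k _
    rw [Matrix.conjTranspose_apply, hA, Matrix.of_apply, Matrix.of_apply, star_trivial]
  refine ⟨Aᴴ * A, ⟨Matrix.posSemidef_conjTranspose_mul_self A, ?_⟩, ?_⟩
  · -- pattern zeros
    intro i j hij h1 h2
    rw [SE]
    have hvi := i.isLt
    have hvj := j.isLt
    have hne : i.val ≠ j.val := fun hh => hij (Fin.ext hh)
    have hv1 : j.val ≠ (i.val + 1) % m :=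
      fun hh => h1 (Fin.ext (hh.trans (val_add_one hm i).symm))
    have hv2 : i.val ≠ (j.val + 1) % m :=
      fun hh => h2 (Fin.ext (hh.trans (val_add_one hm j).symm))
    rcases Nat.lt_or_ge i.val j.val with hlt | hge
    · apply EV7 hm ?_ hvj ?_
      · have : (i.val + 1) % m = i.val + 1 := Nat.mod_eq_of_lt (by omega)
        omega
      · rintro ⟨hz, hbm⟩
        exact hv2 (by rw [hbm, show m-1+1 = m by omega, Nat.mod_self, hz])
    · have hgt : j.val < i.val := by omega
      have hswap : (∑ k ∈ Finset.range m, vf m k i.val * vf m k j.val)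
          = ∑ k ∈ Finset.range m, vf m k j.val * vf m k i.val :=
        Finset.sum_congr rfl (fun k _ => mul_comm _ _)
      rw [hswap]
      apply EV7 hm ?_ hvi ?_
      · have : (j.val + 1) % m = j.val + 1 := Nat.mod_eq_of_lt (by omega)
        omega
      · rintro ⟨hz, hbm⟩
        exact hv1 (by rw [hbm, show m-1+1 = m by omega, Nat.mod_self, hz])
  · -- not in image
    rintro ⟨γ, hγ⟩
    have hent : ∀ x y : Fin m, phi (cycleComplex m) γ x y = (Aᴴ * A) x y :=
      fun x y => congrFun (congrFun hγ x) y
    obtain ⟨a, ha⟩ : ∃ a : ℕ → ℝ,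
        ∀ i : ℕ, a i = γ {(i : Fin m), ((i+1 : ℕ) : Fin m)} ((i : Fin m)) := ⟨_, fun i => rfl⟩
    obtain ⟨b, hb⟩ : ∃ b : ℕ → ℝ,
        ∀ i : ℕ, b i = γ {(i : Fin m), ((i+1 : ℕ) : Fin m)} (((i+1 : ℕ) : Fin m)) := ⟨_, fun i => rfl⟩
    have hsucc : ∀ i : ℕ, ((i : Fin m) + 1) = ((i+1 : ℕ) : Fin m) := fun i =>
      (Nat.cast_add_one i).symm
    -- edge values
    have hs1 : ∀ i : ℕ, i ≤ m - 3 → a i * b i = 1 := by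
      intro i hi
      have h0 := phi_edge hm γ (i : Fin m)
      rw [hent, SE, val_natCast_lt (show i < m by omega)] at h0
      rw [hsucc i] at h0
      rw [val_natCast_lt (show i + 1 < m by omega)] at h0
      rw [← ha i, ← hb i] at h0
      exact h0.symm.trans (EV1 hm hi)
    have hslast : a (m-2) * b (m-2) = 2 * ((-1)^(m-3) * Wf m 1 / Wf m (m-1)) := by
      have h0 := phi_edge hm γ ((m-2 : ℕ) : Fin m)
      rw [hent, SE, val_natCast_lt (show m-2 < m by omega)] at h0
      rw [hsucc (m-2)] at h0
      rw [val_natCast_lt (show m-2+1 < m by omega)] at h0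
      rw [← ha (m-2), ← hb (m-2)] at h0
      rw [show m-2+1 = m-1 by omega] at h0
      exact h0.symm.trans (EV2 hm)
    have hwrap : a (m-1) * b (m-1) = 1 := by
      have h0 := phi_edge hm γ ((m-1 : ℕ) : Fin m)
      rw [hent, SE, val_natCast_lt (show m-1 < m by omega)] at h0
      rw [hsucc (m-1)] at h0
      rw [← ha (m-1), ← hb (m-1)] at h0
      rw [show (((m-1+1 : ℕ) : Fin m)).val = 0 by
        rw [show m-1+1 = m by omega, Fin.val_natCast, Nat.mod_self]] at h0
      exact h0.symm.trans (EV3 hm)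
    -- diagonal bounds
    have hbase : a 0 * a 0 ≤ Wf m 2 / Wf m 1 := by
      have h0 := phi_diag_single hm γ ((0 : ℕ) : Fin m)
      rw [hent, SE, val_natCast_lt (show 0 < m by omega)] at h0
      rw [hsucc 0] at h0
      rw [← ha 0] at h0
      rw [EV4 hm] at h0
      exact h0
    have hBp : ∀ i : ℕ, i + 1 < m →
        a (i+1) * a (i+1) + b i * b i
          ≤ ∑ k ∈ Finset.range m, vf m k (i+1) * vf m k (i+1) := by
      intro i hi
      have h0 := phi_diag_pair hm γ (i : Fin m)
      rw [hent, SE] at h0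
      rw [hsucc i] at h0
      rw [hsucc (i+1)] at h0
      rw [val_natCast_lt hi] at h0
      rw [← ha (i+1), ← hb i] at h0
      exact h0
    -- chain
    have key : ∀ i : ℕ, i ≤ m - 2 → a i * a i ≤ Wf m (i+2) / Wf m (i+1) := by
      intro i
      induction i with
      | zero => intro _; exact hbase
      | succ n ih =>
        intro hn
        have hn3 : n ≤ m - 3 := by omega
        have ihn := ih (by omega)
        have h1 := hs1 n hn3
        have hna : a n ≠ 0 := by
          intro h0; rw [h0, zero_mul] at h1; norm_num at h1
        have hpos : 0 < a n * a n := mul_self_pos.mpr hna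
        have hbb : b n * b n = 1 / (a n * a n) := by
          rw [eq_div_iff (ne_of_gt hpos)]
          calc b n * b n * (a n * a n) = (a n * b n) * (a n * b n) := by ring
            _ = 1 := by rw [h1]; norm_num
        have hW1 := Wf_pos m (n+1)
        have hW2 := Wf_pos m (n+2)
        have hW3 := Wf_pos m (n+3)
        have hinv : Wf m (n+1) / Wf m (n+2) ≤ b n * b n := by
          rw [hbb, show Wf m (n+1) / Wf m (n+2) = 1 / (Wf m (n+2) / Wf m (n+1)) by
            rw [one_div_div]]
          exact one_div_le_one_div_of_le hpos ihn
        have hB := hBp n (by omega)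
        rw [EV5 hm (by omega) (by omega)] at hB
        linarith
    -- final contradiction
    have hkey2 := key (m-2) le_rfl
    rw [show m-2+2 = m by omega, show m-2+1 = m-1 by omega, Wf_pred hm, Wf_last hm] at hkey2
    have hsl := hslast
    rw [Wf_one hm, Wf_pred hm] at hsl
    have hsl2 : (a (m-2) * b (m-2)) * (a (m-2) * b (m-2)) = 1 := by
      rw [hsl]
      rcases Nat.even_or_odd (m-3) with he | ho
      · rw [he.neg_one_pow]; norm_num
      · rw [ho.neg_one_pow]; norm_num
    have hpos2 : 0 < a (m-2) * a (m-2) := by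
      apply mul_self_pos.mpr
      intro h0
      rw [h0] at hsl2
      simp at hsl2
    have hbb2 : b (m-2) * b (m-2) = 1 / (a (m-2) * a (m-2)) := by
      rw [eq_div_iff (ne_of_gt hpos2)]
      calc b (m-2) * b (m-2) * (a (m-2) * a (m-2))
            = (a (m-2) * b (m-2)) * (a (m-2) * b (m-2)) := by ring
        _ = 1 := hsl2
    have hb2ge : (2:ℝ) ≤ b (m-2) * b (m-2) := by
      rw [hbb2, show (2:ℝ) = 1 / (1/2) by norm_num]
      apply one_div_le_one_div_of_le hpos2
      linarith
    have hBlast := hBp (m-2) (by omega)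
    rw [show m-2+1 = m-1 by omega, EV6 hm] at hBlast
    have hwrap2 := hwrap
    have hpos3 : 0 < a (m-1) * a (m-1) := by
      apply mul_self_pos.mpr
      intro h0
      rw [h0, zero_mul] at hwrap2
      norm_num at hwrap2
    have tent := tentL hm
    have hsum : ∑ k ∈ Finset.range (m-2), (Wf m 1)^2 / (Wf m (k+1) * Wf m (k+2))
        = 4 * ∑ k ∈ Finset.range (m-2), 1 / (Wf m (k+1) * Wf m (k+2)) := by
      rw [Finset.mul_sum]
      apply Finset.sum_congr rfl
      intro k _
      rw [Wf_one hm]; ring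
    rw [hsum, Wf_one hm, Wf_pred hm, Wf_last hm,
      show ((2:ℝ))^2/((4:ℝ)*2) = 1/2 by norm_num] at hBlast
    linarith
end
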